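/- arXiv:2403.10451 — 9 statements merged into one kernel-verified Lean document; each statement's English description precedes it below -/
import Mathlib

section
/- Consider a finite two-player zero-sum game and n ≥ 1 rounds of play in which the maximizer plays mixed strategies φ_1,…,φ_n and the minimizer best-responds with pure strategies a_1,…,a_n ∈ 𝒜, i.e. a_t minimizes E_{φ_t}[u(a,·)] over a ∈ 𝒜 for every t. If the maximizer's average regret satisfies max_{f ∈ ℱ} (1/n)·Σ_{t=1}^n u(a_t, f) − (1/n)·Σ_{t=1}^n E_{φ_t}[u(a_t,·)] ≤ ε for some ε ≥ 0, then the average mixed strategy φ̄ = (1/n)·Σ_t φ_t is an ε-approximate maxmin strategy, the mixed strategy ᾱ that plays each a_t with probability 1/n is an ε-approximate minmax strategy, and (ᾱ, φ̄) is an ε-approximate Nash equilibrium. -/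
open Finset

lemma wsum_le_sup' {ι : Type*} [Fintype ι] [Nonempty ι] (w g : ι → ℝ)
    (hw0 : ∀ i, 0 ≤ w i) (hw1 : ∑ i, w i = 1) :
    ∑ i, w i * g i ≤ univ.sup' univ_nonempty g := by
  calc ∑ i, w i * g i ≤ ∑ i, w i * univ.sup' univ_nonempty g := by
        refine Finset.sum_le_sum fun i _ => ?_
        exact mul_le_mul_of_nonneg_left (le_sup' g (mem_univ i)) (hw0 i)
    _ = univ.sup' univ_nonempty g := by rw [← Finset.sum_mul, hw1, one_mul]

lemma inf'_le_wsum {ι : Type*} [Fintype ι] [Nonempty ι] (w g : ι → ℝ)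
    (hw0 : ∀ i, 0 ≤ w i) (hw1 : ∑ i, w i = 1) :
    univ.inf' univ_nonempty g ≤ ∑ i, w i * g i := by
  calc univ.inf' univ_nonempty g = ∑ i, w i * univ.inf' univ_nonempty g := by
        rw [← Finset.sum_mul, hw1, one_mul]
    _ ≤ ∑ i, w i * g i := by
        refine Finset.sum_le_sum fun i _ => ?_
        exact mul_le_mul_of_nonneg_left (inf'_le g (mem_univ i)) (hw0 i)

/-- If in `n ≥ 1` rounds the maximizer plays mixed strategies `φ 1, …, φ n`,
the minimizer best-responds with pure strategies `a 1, …, a n`, and the maximizer's average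
regret is at most `ε`, then the average strategy `φbar` is an ε-approximate maxmin strategy,
the uniform mixture `αbar` of the best responses is an ε-approximate minmax strategy, and
`(αbar, φbar)` is an ε-approximate Nash equilibrium. -/
theorem noregret_average_play_approx_nash
    {A F : Type*} [Fintype A] [Fintype F] [Nonempty A] [Nonempty F] [DecidableEq A]
    (u : A → F → ℝ) (n : ℕ) (hn : 1 ≤ n) (ε : ℝ) (hε : 0 ≤ ε)
    (φ : Fin n → F → ℝ) (hφ0 : ∀ t f, 0 ≤ φ t f) (hφ1 : ∀ t, ∑ f, φ t f = 1)
    (a : Fin n → A)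
    -- the minimizer best responds at every round:
    (hbr : ∀ t, ∀ a' : A, ∑ f, φ t f * u (a t) f ≤ ∑ f, φ t f * u a' f)
    -- the maximizer's average regret is at most ε:
    (hreg : univ.sup' univ_nonempty (fun f => (1 / (n : ℝ)) * ∑ t, u (a t) f)
        - (1 / (n : ℝ)) * ∑ t, ∑ f, φ t f * u (a t) f ≤ ε)
    -- the average mixed strategies:
    (φbar : F → ℝ) (hφbar : ∀ f, φbar f = (1 / (n : ℝ)) * ∑ t, φ t f)
    (αbar : A → ℝ)
    (hαbar : ∀ a' : A, αbar a' = (1 / (n : ℝ)) * ∑ t, (if a t = a' then (1 : ℝ) else 0)) :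
    -- φbar is an ε-approximate maxmin strategy:
    (∀ φ' : F → ℝ, (∀ f, 0 ≤ φ' f) → ∑ f, φ' f = 1 →
        univ.inf' univ_nonempty (fun a' => ∑ f, φ' f * u a' f) - ε
          ≤ univ.inf' univ_nonempty (fun a' => ∑ f, φbar f * u a' f)) ∧
    -- αbar is an ε-approximate minmax strategy:
    (∀ α' : A → ℝ, (∀ a', 0 ≤ α' a') → ∑ a', α' a' = 1 →
        univ.sup' univ_nonempty (fun f => ∑ a', αbar a' * u a' f)
          ≤ univ.sup' univ_nonempty (fun f => ∑ a', α' a' * u a' f) + ε) ∧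
    -- (αbar, φbar) is an ε-approximate Nash equilibrium:
    (univ.sup' univ_nonempty (fun f => ∑ a', αbar a' * u a' f) - ε
        ≤ ∑ a', ∑ f, αbar a' * φbar f * u a' f) ∧
    (∑ a', ∑ f, αbar a' * φbar f * u a' f
        ≤ univ.inf' univ_nonempty (fun a' => ∑ f, φbar f * u a' f) + ε) := by
  have hn0 : (0:ℝ) < (n:ℝ) := by exact_mod_cast Nat.lt_of_lt_of_le Nat.zero_lt_one hn
  have hninv : (0:ℝ) ≤ 1 / (n:ℝ) := by positivity
  set V : ℝ := (1 / (n : ℝ)) * ∑ t, ∑ f, φ t f * u (a t) f with hV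
  -- basic probability facts
  have hα0 : ∀ a', 0 ≤ αbar a' := by
    intro a'; rw [hαbar]
    refine mul_nonneg hninv (Finset.sum_nonneg fun t _ => ?_)
    split <;> norm_num
  have hα1 : ∑ a', αbar a' = 1 := by
    simp only [hαbar]
    rw [← Finset.mul_sum, Finset.sum_comm]
    simp [one_div, mul_comm, ne_of_gt hn0]
  have hφb0 : ∀ f, 0 ≤ φbar f := by
    intro f; rw [hφbar]
    exact mul_nonneg hninv (Finset.sum_nonneg fun t _ => hφ0 t f)
  have hφb1 : ∑ f, φbar f = 1 := by
    simp only [hφbar]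
    rw [← Finset.mul_sum, Finset.sum_comm]
    simp only [hφ1]
    simp [ne_of_gt hn0]
  -- αbar's expected payoff is the empirical average
  have hA : ∀ f, ∑ a', αbar a' * u a' f = (1 / (n : ℝ)) * ∑ t, u (a t) f := by
    intro f
    simp only [hαbar, mul_assoc, ← Finset.mul_sum]
    congr 1
    simp only [Finset.sum_mul, ite_mul, one_mul, zero_mul]
    rw [Finset.sum_comm]
    simp
  -- φbar's expected payoff is the time-average
  have hB : ∀ a', ∑ f, φbar f * u a' f = (1 / (n : ℝ)) * ∑ t, ∑ f, φ t f * u a' f := by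
    intro a'
    simp only [hφbar, mul_assoc, ← Finset.mul_sum]
    congr 1
    rw [Finset.sum_comm]
    congr 1; funext f
    rw [Finset.sum_mul]
  -- key bounds through V
  have hsupV : univ.sup' univ_nonempty (fun f => ∑ a', αbar a' * u a' f) ≤ V + ε := by
    have : univ.sup' univ_nonempty (fun f => ∑ a', αbar a' * u a' f)
        = univ.sup' univ_nonempty (fun f => (1 / (n : ℝ)) * ∑ t, u (a t) f) :=
      Finset.sup'_congr univ_nonempty rfl (fun f _ => hA f)
    rw [this]; linarith [hreg]
  have hVinf : V ≤ univ.inf' univ_nonempty (fun a' => ∑ f, φbar f * u a' f) := by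
    refine Finset.le_inf' univ_nonempty _ fun a' _ => ?_
    rw [hB a']
    exact mul_le_mul_of_nonneg_left (Finset.sum_le_sum fun t _ => hbr t a') hninv
  -- the equilibrium payoff, two ways
  have hE1 : ∑ a', ∑ f, αbar a' * φbar f * u a' f
      = ∑ a', αbar a' * ∑ f, φbar f * u a' f := by
    congr 1; funext a'
    rw [Finset.mul_sum]; congr 1; funext f; ring
  have hE2 : ∑ a', ∑ f, αbar a' * φbar f * u a' f
      = ∑ f, φbar f * ∑ a', αbar a' * u a' f := by
    rw [Finset.sum_comm]
    congr 1; funext f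
    rw [Finset.mul_sum]; congr 1; funext a'; ring
  have hElo : univ.inf' univ_nonempty (fun a' => ∑ f, φbar f * u a' f)
      ≤ ∑ a', ∑ f, αbar a' * φbar f * u a' f := by
    rw [hE1]; exact inf'_le_wsum αbar _ hα0 hα1
  have hEhi : ∑ a', ∑ f, αbar a' * φbar f * u a' f
      ≤ univ.sup' univ_nonempty (fun f => ∑ a', αbar a' * u a' f) := by
    rw [hE2]; exact wsum_le_sup' φbar _ hφb0 hφb1
  refine ⟨?_, ?_, ?_, ?_⟩
  · intro φ' hφ'0 hφ'1
    have h1 : univ.inf' univ_nonempty (fun a' => ∑ f, φ' f * u a' f)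
        ≤ ∑ a', αbar a' * ∑ f, φ' f * u a' f := inf'_le_wsum αbar _ hα0 hα1
    have h2 : ∑ a', αbar a' * ∑ f, φ' f * u a' f
        = ∑ f, φ' f * ∑ a', αbar a' * u a' f := by
      simp only [Finset.mul_sum]
      rw [Finset.sum_comm]
      congr 1; funext f; congr 1; funext a'; ring
    have h3 : ∑ f, φ' f * ∑ a', αbar a' * u a' f
        ≤ univ.sup' univ_nonempty (fun f => ∑ a', αbar a' * u a' f) :=
      wsum_le_sup' φ' _ hφ'0 hφ'1
    linarith
  · intro α' hα'0 hα'1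
    have h1 : univ.inf' univ_nonempty (fun a' => ∑ f, φbar f * u a' f)
        ≤ ∑ a', α' a' * ∑ f, φbar f * u a' f := inf'_le_wsum α' _ hα'0 hα'1
    have h2 : ∑ a', α' a' * ∑ f, φbar f * u a' f
        = ∑ f, φbar f * ∑ a', α' a' * u a' f := by
      simp only [Finset.mul_sum]
      rw [Finset.sum_comm]
      congr 1; funext f; congr 1; funext a'; ring
    have h3 : ∑ f, φbar f * ∑ a', α' a' * u a' f
        ≤ univ.sup' univ_nonempty (fun f => ∑ a', α' a' * u a' f) :=
      wsum_le_sup' φbar _ hφb0 hφb1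
    linarith
  · linarith
  · linarith
end

section
/- Fix T ∈ ℕ and B ∈ ℝ with 1 < B < T and ⌈B⌉ + ⌊B⌋ ≥ T + 1. Then the weights β_l (l ∈ {0,…,T}) defined in the context are nonnegative and sum to 1, and the resulting mixed strategy of the algorithm player in SRP-R guarantees the value V: for every k ∈ {1,…,T}, Σ_{l=0}^{T} β_l · u(l,k) ≤ V, with equality for every k ∈ {1,…,T−⌊B⌋} ∪ {T}. In particular, max_{k ∈ {1,…,T}} Σ_l β_l·u(l,k) = V, so the competitive ratio of the finite-horizon ski-rental problem in this regime is V. -/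
open Finset

/-- For `1 < B < T` and `⌈B⌉ + ⌊B⌋ ≥ T + 1`, the explicit weights `β` form a
mixed strategy of the algorithm player in SRP-R that guarantees the value `V`: the adversary's
expected payoff is at most `V` for every pure strategy `k ∈ {1,…,T}`, with equality for
`k ∈ {1,…,T−⌊B⌋} ∪ {T}`; hence the competitive ratio in this regime is `V`. -/
theorem srpr_worst_case_strategy_large_B
    (T : ℕ) (B : ℝ) (hB1 : 1 < B) (hBT : B < T)
    (hreg : T + 1 ≤ ⌈B⌉₊ + ⌊B⌋₊)
    (u : ℕ → ℕ → ℝ)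
    (hu : ∀ l k, u l k =
      if l < k then ((l : ℝ) + B) / min (k : ℝ) B else (k : ℝ) / min (k : ℝ) B)
    (β : ℕ → ℝ) (β0 V : ℝ)
    (hβ0 : β0 = ((B * (⌊B⌋₊ : ℝ) / ((T : ℝ) - B)) * (B / (B - 1)) ^ (T - ⌊B⌋₊ - 1)
                  - (B - 1))⁻¹)
    (hβlow : ∀ l, l + ⌊B⌋₊ + 1 ≤ T → β l = (B / (B - 1)) ^ l * β0)
    (hβT : β T = (B / ((T : ℝ) - B)) * (B / (B - 1)) ^ (T - ⌊B⌋₊ - 1)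
                  * (B + (⌊B⌋₊ : ℝ) - (T : ℝ)) * β0)
    (hβelse : ∀ l, ¬ l + ⌊B⌋₊ + 1 ≤ T → l ≠ T → β l = 0)
    (hV : V = (1 - ((T : ℝ) - B) * (B - 1)
                / (B * (⌊B⌋₊ : ℝ) * (B / (B - 1)) ^ (T - ⌊B⌋₊ - 1)))⁻¹) :
    (∀ l ≤ T, 0 ≤ β l) ∧
    (∑ l ∈ Finset.range (T + 1), β l = 1) ∧
    (∀ k ∈ Finset.Icc 1 T, ∑ l ∈ Finset.range (T + 1), β l * u l k ≤ V) ∧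
    (∀ k ∈ Finset.Icc 1 T, (k ≤ T - ⌊B⌋₊ ∨ k = T) →
        ∑ l ∈ Finset.range (T + 1), β l * u l k = V) ∧
    ((Finset.Icc 1 T).sup' (Finset.nonempty_Icc.mpr (by exact_mod_cast (hB1.trans hBT).le))
        (fun k => ∑ l ∈ Finset.range (T + 1), β l * u l k) = V) := by
  have hB0 : (0:ℝ) < B := by linarith
  have hB1' : (0:ℝ) < B - 1 := by linarith
  set m := ⌊B⌋₊ with hmdef
  set r := B / (B - 1) with hrdef
  have hm1 : 1 ≤ m := Nat.le_floor (by exact_mod_cast hB1.le)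
  have hmB : (m:ℝ) ≤ B := Nat.floor_le hB0.le
  have hmT : m < T := by exact_mod_cast lt_of_le_of_lt hmB hBT
  set s := T - m with hsdef
  have hs1 : 1 ≤ s := by omega
  have hsm : s ≤ m := by
    have := Nat.ceil_le_floor_add_one B
    omega
  have hsB : (s:ℝ) ≤ B := le_trans (by exact_mod_cast hsm) hmB
  have hTBm : (T:ℝ) < B + m := by
    have h1 : ((T:ℝ) + 1) ≤ (⌈B⌉₊ : ℝ) + (m : ℝ) := by exact_mod_cast hreg
    have h2 : (⌈B⌉₊ : ℝ) < B + 1 := Nat.ceil_lt_add_one hB0.le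
    linarith
  have hTB : (0:ℝ) < (T:ℝ) - B := by linarith
  have hr1 : 1 < r := by
    rw [hrdef, lt_div_iff₀ hB1']; linarith
  have hr0 : (0:ℝ) < r := lt_trans one_pos hr1
  have hBr : (B - 1) * r = B := by rw [hrdef]; field_simp
  set E := r ^ (s - 1) with hEdef
  have hE0 : (0:ℝ) < E := pow_pos hr0 _
  have hrs : r ^ s = E * r := by
    rw [hEdef, ← pow_succ]
    congr 1
    omega
  set A := B * (m:ℝ) / ((T:ℝ) - B) * E with hAdef
  have hm0' : (0:ℝ) < m := by exact_mod_cast hm1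
  have hA0 : 0 < A := by
    rw [hAdef]; positivity
  have hD0 : 0 < A - (B - 1) := by
    have hid : A - (B - 1) = (B - 1) * (r ^ s - 1) + B / ((T:ℝ) - B) * E * (B + m - T) := by
      rw [hrs, hAdef, hrdef]
      field_simp [hB0.ne', hB1'.ne', hTB.ne', hE0.ne', hm0'.ne']
      ring
    have h1 : 1 < r ^ s := one_lt_pow₀ hr1 (by omega)
    have h2 : (0:ℝ) ≤ B / ((T:ℝ) - B) * E * (B + m - T) :=
      mul_nonneg (mul_nonneg (div_nonneg hB0.le hTB.le) hE0.le) (by linarith)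
    have h3 : 0 < (B - 1) * (r ^ s - 1) := mul_pos hB1' (by linarith)
    linarith [hid ▸ (by linarith : (0:ℝ) < (B - 1) * (r ^ s - 1) + B / ((T:ℝ) - B) * E * (B + m - T))]
  have hβ0' : β0 = (A - (B - 1))⁻¹ := hβ0
  have hβ0pos : 0 < β0 := by rw [hβ0']; exact inv_pos.mpr hD0
  have hβT' : β T = B / ((T:ℝ) - B) * E * (B + (m:ℝ) - (T:ℝ)) * β0 := hβT
  have hβTpos : 0 ≤ β T := by
    rw [hβT']
    exact mul_nonneg (mul_nonneg (mul_nonneg (div_nonneg hB0.le hTB.le) hE0.le) (by linarith)) hβ0pos.le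
  -- value identity
  have hVA : V = A / (A - (B - 1)) := by
    have h1 : ((T:ℝ) - B) * (B - 1) / (B * (m:ℝ) * E) = (B - 1) / A := by
      rw [hAdef]; field_simp [hB0.ne', hB1'.ne', hTB.ne', hE0.ne', hm0'.ne']
    rw [hV, h1, show (1:ℝ) - (B-1)/A = (A - (B-1))/A by field_simp, inv_div]
  have hV0 : 0 < V := by rw [hVA]; positivity
  have hW : β0 * ((B - 1) * r ^ s) + β T = V := by
    have h1 : β0 * ((B - 1) * r ^ s) + β T = β0 * A := by
      rw [hβT', hrs, hAdef, hrdef]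
      field_simp [hB0.ne', hB1'.ne', hTB.ne', hE0.ne', hm0'.ne']
      ring
    rw [h1, hβ0', hVA, inv_mul_eq_div]
  -- geometric sums
  have geo : ∀ j : ℕ, ∑ l ∈ Finset.range j, r ^ l = (B - 1) * (r ^ j - 1) := by
    intro j
    have hrm : (B - 1) * (r - 1) = 1 := by rw [hrdef]; field_simp [hB0.ne', hB1'.ne', hTB.ne', hE0.ne', hm0'.ne']; ring
    rw [geom_sum_eq hr1.ne', div_eq_iff (sub_ne_zero.mpr hr1.ne')]
    linear_combination (1 - r ^ j) * hrm
  have tele : ∀ j : ℕ, ∑ l ∈ Finset.range j, ((l:ℝ) + B) * r ^ l = (B - 1) * j * r ^ j := by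
    intro j
    induction j with
    | zero => simp
    | succ n ih =>
      rw [Finset.sum_range_succ, ih, pow_succ]
      push_cast
      linear_combination (-((n:ℝ) + 1) * r ^ n) * hBr
  -- generic splitting of the β-weighted sum
  have sum_beta : ∀ f : ℕ → ℝ, ∑ l ∈ Finset.range (T + 1), β l * f l
      = β0 * (∑ l ∈ Finset.range s, r ^ l * f l) + β T * f T := by
    intro f
    have h1 : ∑ l ∈ Finset.range s, β l * f l = β0 * ∑ l ∈ Finset.range s, r ^ l * f l := by
      rw [Finset.mul_sum]
      apply Finset.sum_congr rfl
      intro l hl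
      simp only [Finset.mem_range] at hl
      rw [hβlow l (by omega)]
      ring
    have h2 : ∑ l ∈ Finset.Ico s (T + 1), β l * f l = β T * f T := by
      rw [Finset.sum_Ico_succ_top (by omega : s ≤ T)]
      have h3 : ∑ l ∈ Finset.Ico s T, β l * f l = 0 := by
        apply Finset.sum_eq_zero
        intro l hl
        simp only [Finset.mem_Ico] at hl
        rw [hβelse l (by omega) (by omega), zero_mul]
      rw [h3, zero_add]
    rw [← Finset.sum_range_add_sum_Ico _ (by omega : s ≤ T + 1), h1, h2]
  -- equality for small k
  have hGlow : ∀ k : ℕ, 1 ≤ k → k ≤ s → ∑ l ∈ Finset.range (T + 1), β l * u l k = V := by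
    intro k hk1 hks
    have hkB : (k:ℝ) ≤ B := le_trans (by exact_mod_cast hks) hsB
    have hk0 : (0:ℝ) < k := by exact_mod_cast hk1
    have hmin : min (k:ℝ) B = k := min_eq_left hkB
    rw [sum_beta]
    have huT : u T k = 1 := by
      rw [hu, if_neg (by omega : ¬ T < k), hmin]
      exact div_self hk0.ne'
    have hsplit : ∑ l ∈ Finset.range s, r ^ l * u l k = (B - 1) * r ^ s := by
      rw [← Finset.sum_range_add_sum_Ico _ hks]
      have h1 : ∑ l ∈ Finset.range k, r ^ l * u l k = (B - 1) * r ^ k := by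
        have hc : ∀ l ∈ Finset.range k, r ^ l * u l k = (((l:ℝ) + B) * r ^ l) / k := by
          intro l hl
          simp only [Finset.mem_range] at hl
          rw [hu, if_pos hl, hmin]
          ring
        rw [Finset.sum_congr rfl hc, ← Finset.sum_div, tele k]
        field_simp [hB0.ne', hB1'.ne', hTB.ne', hE0.ne', hm0'.ne']
      have h2 : ∑ l ∈ Finset.Ico k s, r ^ l * u l k = (B - 1) * (r ^ s - r ^ k) := by
        have hc : ∀ l ∈ Finset.Ico k s, r ^ l * u l k = r ^ l := by
          intro l hl
          simp only [Finset.mem_Ico] at hl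
          rw [hu, if_neg (by omega : ¬ l < k), hmin, div_self hk0.ne', mul_one]
        rw [Finset.sum_congr rfl hc, Finset.sum_Ico_eq_sub _ hks, geo, geo]
        ring
      rw [h1, h2]
      ring
    rw [hsplit, huT, mul_one]
    exact hW
  -- formula for large k
  have hGhigh : ∀ k : ℕ, s < k → k ≤ T →
      ∑ l ∈ Finset.range (T + 1), β l * u l k
        = (β0 * ((B - 1) * ((s:ℝ) * r ^ s)) + β T * k) / min (k:ℝ) B := by
    intro k hsk hkT
    have hk0 : (0:ℝ) < k := by
      have : 0 < k := by omega
      exact_mod_cast this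
    have hmin0 : (0:ℝ) < min (k:ℝ) B := lt_min hk0 hB0
    rw [sum_beta]
    have huT : u T k = (k:ℝ) / min (k:ℝ) B := by
      rw [hu, if_neg (by omega : ¬ T < k)]
    have h1 : ∑ l ∈ Finset.range s, r ^ l * u l k
        = ((B - 1) * ((s:ℝ) * r ^ s)) / min (k:ℝ) B := by
      have hc : ∀ l ∈ Finset.range s, r ^ l * u l k = (((l:ℝ) + B) * r ^ l) / min (k:ℝ) B := by
        intro l hl
        simp only [Finset.mem_range] at hl
        rw [hu, if_pos (by omega : l < k)]
        ring
      rw [Finset.sum_congr rfl hc, ← Finset.sum_div, tele s]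
      ring
    rw [h1, huT]
    field_simp [hB0.ne', hB1'.ne', hTB.ne', hE0.ne', hm0'.ne']
  -- the key identity for k = T
  have hscast : (s:ℝ) = (T:ℝ) - (m:ℝ) := by
    rw [hsdef]
    push_cast [Nat.cast_sub hmT.le]
    ring
  have hkey : β0 * ((B - 1) * ((s:ℝ) * r ^ s)) + β T * (T:ℝ) = B * V := by
    rw [← hW, hβT', hrs, hscast, hrdef]
    field_simp [hB0.ne', hB1'.ne', hTB.ne', hE0.ne', hm0'.ne']
    ring
  have hsT : s < T := by omega
  have hGT : ∑ l ∈ Finset.range (T + 1), β l * u l T = V := by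
    rw [hGhigh T hsT le_rfl, min_eq_right hBT.le, hkey, mul_div_cancel_left₀ _ hB0.ne']
  -- upper bound
  have hGle : ∀ k ∈ Finset.Icc 1 T, ∑ l ∈ Finset.range (T + 1), β l * u l k ≤ V := by
    intro k hk
    simp only [Finset.mem_Icc] at hk
    rcases le_or_gt k s with hks | hsk
    · exact le_of_eq (hGlow k hk.1 hks)
    · rw [hGhigh k hsk hk.2]
      have hs0 : (0:ℝ) < s := by exact_mod_cast hs1
      have hk0 : (0:ℝ) < k := by
        have : 0 < k := by omega
        exact_mod_cast this
      have hCnn : (0:ℝ) ≤ β0 * ((B - 1) * ((s:ℝ) * r ^ s)) := by positivity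
      rcases le_or_gt (k:ℝ) B with hkB | hBk
      · rw [min_eq_left hkB]
        have hsk' : (s:ℝ) ≤ k := by exact_mod_cast hsk.le
        have step1 : (β0 * ((B - 1) * ((s:ℝ) * r ^ s)) + β T * k) / k
            = β0 * ((B - 1) * ((s:ℝ) * r ^ s)) / k + β T := by
          field_simp [hB0.ne', hB1'.ne', hTB.ne', hE0.ne', hm0'.ne']
        have step2 : β0 * ((B - 1) * ((s:ℝ) * r ^ s)) / k
            ≤ β0 * ((B - 1) * ((s:ℝ) * r ^ s)) / s := by
          gcongr
        have step3 : β0 * ((B - 1) * ((s:ℝ) * r ^ s)) / s + β T = V := by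
          rw [← hW]
          congr 1
          field_simp [hB0.ne', hB1'.ne', hTB.ne', hE0.ne', hm0'.ne']
        linarith
      · rw [min_eq_right hBk.le]
        have hkT' : (k:ℝ) ≤ T := by exact_mod_cast hk.2
        have hnum : β0 * ((B - 1) * ((s:ℝ) * r ^ s)) + β T * k
            ≤ β0 * ((B - 1) * ((s:ℝ) * r ^ s)) + β T * T := by
          have := mul_le_mul_of_nonneg_left hkT' hβTpos
          linarith
        calc (β0 * ((B - 1) * ((s:ℝ) * r ^ s)) + β T * k) / B
            ≤ (β0 * ((B - 1) * ((s:ℝ) * r ^ s)) + β T * T) / B := by gcongr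
          _ = V := by rw [hkey, mul_div_cancel_left₀ _ hB0.ne']
  refine ⟨?_, ?_, hGle, ?_, ?_⟩
  · intro l hl
    by_cases h1 : l + m + 1 ≤ T
    · rw [hβlow l h1]
      exact mul_nonneg (pow_nonneg hr0.le l) hβ0pos.le
    · by_cases h2 : l = T
      · rw [h2]; exact hβTpos
      · rw [hβelse l h1 h2]
  · have := sum_beta (fun _ => 1)
    simp only [mul_one] at this
    rw [this, geo s]
    have h1 : β0 * ((B - 1) * (r ^ s - 1)) + β T = V - β0 * (B - 1) := by
      rw [← hW]; ring
    rw [h1, hVA, hβ0']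
    field_simp [hB0.ne', hB1'.ne', hTB.ne', hE0.ne', hm0'.ne']
  · intro k hk hor
    simp only [Finset.mem_Icc] at hk
    rcases hor with h | h
    · exact hGlow k hk.1 h
    · rw [h]; exact hGT
  · apply le_antisymm
    · exact Finset.sup'_le _ _ hGle
    · have hT1 : T ∈ Finset.Icc 1 T := by
        simp only [Finset.mem_Icc]
        omega
      calc V = ∑ l ∈ Finset.range (T + 1), β l * u l T := hGT.symm
        _ ≤ _ := Finset.le_sup' (fun k => ∑ l ∈ Finset.range (T + 1), β l * u l k) hT1
end

section
/- Fix T ∈ ℕ and B ∈ ℝ with 1 < B < T and ⌈B⌉ + ⌊B⌋ < T + 1. Then the weights β_l (l ∈ {0,…,T}) defined in the context are nonnegative and sum to 1, and the resulting mixed strategy of the algorithm player in SRP-R guarantees the value V: for every k ∈ {1,…,T}, Σ_{l=0}^{T} β_l · u(l,k) ≤ V, with equality for every k ∈ {1,…,⌈B⌉−1} ∪ {T}. In particular, max_{k ∈ {1,…,T}} Σ_l β_l·u(l,k) = V, so the competitive ratio of the finite-horizon ski-rental problem in this regime is V. -/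
open Finset

lemma tele_aux (B : ℝ) (hB : B - 1 ≠ 0) (k : ℕ) :
    ∑ l ∈ Finset.range k, (B/(B-1))^l * ((l:ℝ)+B) = (B-1) * k * (B/(B-1))^k := by
  induction k with
  | zero => simp
  | succ k ih =>
    rw [Finset.sum_range_succ, ih]
    push_cast
    rw [pow_succ]
    field_simp
    ring

lemma geo_aux (B : ℝ) (hB : B - 1 ≠ 0) (k : ℕ) :
    ∑ l ∈ Finset.range k, (B/(B-1))^l = (B-1) * ((B/(B-1))^k - 1) := by
  induction k with
  | zero => simp
  | succ k ih =>
    rw [Finset.sum_range_succ, ih]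
    rw [pow_succ]
    field_simp
    ring

/-- For `1 < B < T` and `⌈B⌉ + ⌊B⌋ < T + 1`, the explicit weights `β` form a
mixed strategy of the algorithm player in SRP-R that guarantees the value `V`: the adversary's
expected payoff is at most `V` for every pure strategy `k ∈ {1,…,T}`, with equality for
`k ∈ {1,…,⌈B⌉−1} ∪ {T}`; hence the competitive ratio in this regime is `V`. -/
theorem srpr_worst_case_strategy_small_B
    (T : ℕ) (B : ℝ) (hB1 : 1 < B) (hBT : B < T)
    (hreg : ⌈B⌉₊ + ⌊B⌋₊ < T + 1)
    (u : ℕ → ℕ → ℝ)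
    (hu : ∀ l k, u l k =
      if l < k then ((l : ℝ) + B) / min (k : ℝ) B else (k : ℝ) / min (k : ℝ) B)
    (β : ℕ → ℝ) (β0 V : ℝ)
    (hβ0 : β0 = ((B - 1) * ((B / (B - 1)) ^ (⌈B⌉₊ - 1) * B / ((⌈B⌉₊ : ℝ) - 1) - 1))⁻¹)
    (hβlow : ∀ l, l + 2 ≤ ⌈B⌉₊ → β l = (B / (B - 1)) ^ l * β0)
    (hβtop : β (⌈B⌉₊ - 1) = (B / (B - 1)) ^ (⌈B⌉₊ - 2) * (B + 1 - (⌈B⌉₊ : ℝ))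
                  * (B / ((⌈B⌉₊ : ℝ) - 1)) * β0)
    (hβelse : ∀ l, ¬ l + 2 ≤ ⌈B⌉₊ → l ≠ ⌈B⌉₊ - 1 → β l = 0)
    (hV : V = (1 - (((⌈B⌉₊ : ℝ) - 1) / B) * ((B - 1) / B) ^ (⌈B⌉₊ - 1))⁻¹) :
    (∀ l ≤ T, 0 ≤ β l) ∧
    (∑ l ∈ Finset.range (T + 1), β l = 1) ∧
    (∀ k ∈ Finset.Icc 1 T, ∑ l ∈ Finset.range (T + 1), β l * u l k ≤ V) ∧
    (∀ k ∈ Finset.Icc 1 T, (k + 1 ≤ ⌈B⌉₊ ∨ k = T) →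
        ∑ l ∈ Finset.range (T + 1), β l * u l k = V) ∧
    ((Finset.Icc 1 T).sup' (Finset.nonempty_Icc.mpr (by exact_mod_cast (hB1.trans hBT).le))
        (fun k => ∑ l ∈ Finset.range (T + 1), β l * u l k) = V) := by
  have hB0 : (0:ℝ) < B := by linarith
  have hB1' : (0:ℝ) < B - 1 := by linarith
  have hB1n : B - 1 ≠ 0 := ne_of_gt hB1'
  have hm2 : 2 ≤ ⌈B⌉₊ := by
    have : 1 < ⌈B⌉₊ := Nat.lt_ceil.mpr (by exact_mod_cast hB1)
    omega
  obtain ⟨p, hp⟩ : ∃ p, ⌈B⌉₊ = p + 2 := ⟨⌈B⌉₊ - 2, by omega⟩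
  have hBm : B ≤ (p:ℝ) + 2 := by
    have := Nat.le_ceil B; rw [hp] at this; push_cast at this; linarith
  have hmB : (p:ℝ) + 2 < B + 1 := by
    have := Nat.ceil_lt_add_one hB0.le; rw [hp] at this; push_cast at this; linarith
  have hMB : (p:ℝ) + 1 < B := by linarith
  have hM0 : (0:ℝ) < (p:ℝ) + 1 := by positivity
  have hfloor1 : 1 ≤ ⌊B⌋₊ := Nat.le_floor (by exact_mod_cast hB1.le)
  have hmT : p + 2 < T := by omega
  -- rewrite hypotheses
  rw [hp] at hβ0 hβlow hβtop hβelse hV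
  simp only [Nat.add_sub_cancel, show p + 2 - 1 = p + 1 from rfl] at hβ0 hβtop hβelse hV
  push_cast at hβ0 hβtop hV
  -- hβ0 : β0 = ((B - 1) * ((B / (B - 1)) ^ (p+1) * B / ((p:ℝ) + 2 - 1) - 1))⁻¹
  have hr1 : 1 < B / (B - 1) := by rw [lt_div_iff₀ hB1']; linarith
  have hr0 : (0:ℝ) < B / (B - 1) := by positivity
  have hM0 : (0:ℝ) < (p:ℝ) + 1 := by positivity
  have hM0' : ((p:ℝ) + 1) ≠ 0 := ne_of_gt hM0
  have hMB : (p:ℝ) + 1 < B := by linarith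
  rw [show ((p:ℝ) + 2 - 1) = (p:ℝ) + 1 from by ring] at hβ0 hβtop hV
  -- replace powers by an opaque constant c
  have hpow : (B / (B - 1)) ^ p = (B / (B - 1)) ^ (p+1) * ((B - 1)/B) := by
    rw [pow_succ]; field_simp
  have hdc : ((B - 1) / B) ^ (p + 1) = ((B / (B - 1)) ^ (p+1))⁻¹ := by
    rw [← inv_pow, inv_div]
  rw [hpow] at hβtop
  rw [hdc] at hV
  have hc1 : 1 < (B / (B - 1)) ^ (p + 1) := one_lt_pow₀ hr1 (by omega)
  obtain ⟨c, hc⟩ : ∃ c : ℝ, (B / (B - 1)) ^ (p + 1) = c := ⟨_, rfl⟩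
  rw [hc] at hβ0 hβtop hV hc1
  have hc0 : (0:ℝ) < c := by linarith
  have hcBM : 0 < B * c - ((p:ℝ)+1) := by nlinarith
  have hcBM' : B * c - ((p:ℝ)+1) ≠ 0 := ne_of_gt hcBM
  have hβ0v : β0 = ((p:ℝ)+1) / ((B - 1) * (B * c - ((p:ℝ)+1))) := by
    have hDeq : c * B / ((p:ℝ) + 1) - 1 = (B * c - ((p:ℝ)+1)) / ((p:ℝ)+1) := by
      field_simp
    rw [hβ0, hDeq, ← mul_div_assoc, inv_div]
  have hVv : V = B * c / (B * c - ((p:ℝ)+1)) := by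
    have hDeq : 1 - ((p:ℝ) + 1) / B * c⁻¹ = (B * c - ((p:ℝ)+1)) / (B * c) := by
      field_simp
    rw [hV, hDeq, inv_div]
  have hβ0pos : 0 < β0 := by rw [hβ0v]; positivity
  have hβnonneg : ∀ l, 0 ≤ β l := by
    intro l
    by_cases h1 : l + 2 ≤ p + 2
    · rw [hβlow l h1]; positivity
    · by_cases h2 : l = p + 1
      · subst h2; rw [hβtop]
        have h3 : (0:ℝ) < B + 1 - ((p:ℝ) + 2) := by linarith
        have := mul_pos (mul_pos (mul_pos (mul_pos hc0
          (by positivity : (0:ℝ) < (B-1)/B)) h3)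
          (by positivity : (0:ℝ) < B/((p:ℝ)+1))) hβ0pos
        linarith
      · rw [hβelse l h1 h2]
  have hzero : ∀ l, p + 2 ≤ l → β l = 0 := fun l hl => hβelse l (by omega) (by omega)
  have hA : ∀ k, k ≤ p + 1 → ∑ l ∈ Finset.range k, β l * ((l:ℝ) + B)
      = β0 * ((B-1) * k * (B/(B-1))^k) := by
    intro k hk
    have h : ∀ l ∈ Finset.range k, β l * ((l:ℝ)+B) = β0 * ((B/(B-1))^l * ((l:ℝ)+B)) := by
      intro l hl
      rw [hβlow l (by simp only [Finset.mem_range] at hl; omega)]; ring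
    rw [Finset.sum_congr rfl h, ← Finset.mul_sum, tele_aux B hB1n k]
  have hG : ∀ k, k ≤ p + 1 → ∑ l ∈ Finset.range k, β l
      = β0 * ((B-1) * ((B/(B-1))^k - 1)) := by
    intro k hk
    have h : ∀ l ∈ Finset.range k, β l = β0 * (B/(B-1))^l := by
      intro l hl
      rw [hβlow l (by simp only [Finset.mem_range] at hl; omega)]; ring
    rw [Finset.sum_congr rfl h, ← Finset.mul_sum, geo_aux B hB1n k]
  have hsum_m : ∑ l ∈ Finset.range (p+2), β l = 1 := by
    rw [Finset.sum_range_succ, hG (p+1) le_rfl, hβtop, hc]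
    rw [hβ0v]
    field_simp
    ring
  have hsum1 : ∑ l ∈ Finset.range (T+1), β l = 1 := by
    rw [← hsum_m]
    apply (Finset.sum_subset (Finset.range_subset_range.mpr (by omega)) ?_).symm
    intro l _ hl
    exact hzero l (by simpa using hl)
  have hsum_full : ∀ k, ∑ l ∈ Finset.range (T+1), β l * u l k
      = ∑ l ∈ Finset.range (p+2), β l * u l k := by
    intro k
    apply (Finset.sum_subset (Finset.range_subset_range.mpr (by omega)) ?_).symm
    intro l _ hl
    rw [hzero l (by simpa using hl), zero_mul]
  have main : ∀ k ∈ Finset.Icc 1 T, ∑ l ∈ Finset.range (T+1), β l * u l k = V := by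
    intro k hk
    rw [Finset.mem_Icc] at hk
    rw [hsum_full k]
    have hk0R : (0:ℝ) < (k:ℝ) := by exact_mod_cast Nat.lt_of_lt_of_le Nat.zero_lt_one hk.1
    have hk0 : ((k:ℝ)) ≠ 0 := ne_of_gt hk0R
    by_cases hkp : k ≤ p + 1
    · have hkR : (k:ℝ) ≤ (p:ℝ) + 1 := by exact_mod_cast hkp
      have hmin : min (k:ℝ) B = (k:ℝ) := min_eq_left (by linarith)
      rw [← Finset.sum_range_add_sum_Ico _ (show k ≤ p+2 by omega)]
      have e1 : ∑ l ∈ Finset.range k, β l * u l k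
          = (∑ l ∈ Finset.range k, β l * ((l:ℝ)+B)) / k := by
        rw [Finset.sum_div]
        refine Finset.sum_congr rfl fun l hl => ?_
        rw [hu l k, if_pos (Finset.mem_range.mp hl), hmin]
        ring
      have e2 : ∑ l ∈ Finset.Ico k (p+2), β l * u l k = 1 - ∑ l ∈ Finset.range k, β l := by
        have h : ∀ l ∈ Finset.Ico k (p+2), β l * u l k = β l := by
          intro l hl
          rw [Finset.mem_Ico] at hl
          rw [hu l k, if_neg (by omega), hmin, div_self hk0, mul_one]
        rw [Finset.sum_congr rfl h]
        have h2 := Finset.sum_range_add_sum_Ico β (show k ≤ p+2 by omega)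
        linarith [hsum_m, h2]
      rw [e1, e2, hA k hkp, hG k hkp]
      obtain ⟨ρ, hρ⟩ : ∃ ρ : ℝ, (B/(B-1))^k = ρ := ⟨_, rfl⟩
      rw [hρ, hVv, hβ0v]
      field_simp
      ring
    · have hkR : B ≤ (k:ℝ) := by
        have h : ((p:ℝ)+2) ≤ (k:ℝ) := by exact_mod_cast (by omega : p+2 ≤ k)
        linarith
      have hmin : min (k:ℝ) B = B := min_eq_right hkR
      have e1 : ∀ l ∈ Finset.range (p+2), β l * u l k = β l * ((l:ℝ)+B) / B := by
        intro l hl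
        rw [hu l k, if_pos (by simp only [Finset.mem_range] at hl; omega), hmin,
          mul_div_assoc]
      rw [Finset.sum_congr rfl e1, ← Finset.sum_div]
      rw [Finset.sum_range_succ, hA (p+1) le_rfl, hβtop, hc]
      push_cast
      rw [hVv, hβ0v]
      field_simp
      ring
  refine ⟨fun l _ => hβnonneg l, hsum1, fun k hk => (main k hk).le,
    fun k hk _ => main k hk,
    le_antisymm (Finset.sup'_le _ _ fun k hk => (main k hk).le) ?_⟩
  have hT : T ∈ Finset.Icc 1 T := Finset.mem_Icc.mpr ⟨by omega, le_rfl⟩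
  calc V = ∑ l ∈ Finset.range (T+1), β l * u l T := (main T hT).symm
    _ ≤ _ := Finset.le_sup' (fun k => ∑ l ∈ Finset.range (T+1), β l * u l k) hT
end

section
/- Fix T ∈ ℕ and B ∈ ℝ with 1 < B < T and ⌈B⌉ + ⌊B⌋ ≥ T + 1, and let β be as defined in the context. Then for every k ∈ {1,…,T−⌊B⌋}, the conditional probability of stopping on the k-th contiguous good-weather day, given continuation through the first k−1, satisfies β_{k−1} / (1 − Σ_{l=0}^{k−2} β_l) = ( (B·⌊B⌋/(T−B))·(B/(B−1))^{T−⌊B⌋−k} − (B−1) )^{−1}. -/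
open Finset

/-- For `1 < B < T` and `⌈B⌉ + ⌊B⌋ ≥ T + 1`, with the optimal worst-case
weights `β` of SRP-R, the conditional probability of stopping on the k-th contiguous
good-weather day (given continuation through the first k−1) is
`((B⌊B⌋/(T−B))·(B/(B−1))^{T−⌊B⌋−k} − (B−1))⁻¹` for every `k ∈ {1,…,T−⌊B⌋}`. -/
theorem srpr_conditional_stopping_large_B
    (T : ℕ) (B : ℝ) (hB1 : 1 < B) (hBT : B < T)
    (hreg : T + 1 ≤ ⌈B⌉₊ + ⌊B⌋₊)
    (β : ℕ → ℝ) (β0 : ℝ)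
    (hβ0 : β0 = ((B * (⌊B⌋₊ : ℝ) / ((T : ℝ) - B)) * (B / (B - 1)) ^ (T - ⌊B⌋₊ - 1)
                  - (B - 1))⁻¹)
    (hβlow : ∀ l, l + ⌊B⌋₊ + 1 ≤ T → β l = (B / (B - 1)) ^ l * β0)
    (hβT : β T = (B / ((T : ℝ) - B)) * (B / (B - 1)) ^ (T - ⌊B⌋₊ - 1)
                  * (B + (⌊B⌋₊ : ℝ) - (T : ℝ)) * β0)
    (hβelse : ∀ l, ¬ l + ⌊B⌋₊ + 1 ≤ T → l ≠ T → β l = 0) :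
    ∀ k, 1 ≤ k → k ≤ T - ⌊B⌋₊ →
      β (k - 1) / (1 - ∑ l ∈ Finset.range (k - 1), β l)
        = ((B * (⌊B⌋₊ : ℝ) / ((T : ℝ) - B)) * (B / (B - 1)) ^ (T - ⌊B⌋₊ - k)
            - (B - 1))⁻¹ := by
  intro k hk1 hkN
  have hB0 : (0:ℝ) < B := by linarith
  have hB1' : (0:ℝ) < B - 1 := by linarith
  have hfl1 : 1 ≤ ⌊B⌋₊ := Nat.le_floor (by exact_mod_cast hB1.le)
  have hflB : (⌊B⌋₊ : ℝ) ≤ B := Nat.floor_le hB0.le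
  have hflT : ⌊B⌋₊ < T := by
    have : (⌊B⌋₊ : ℝ) < (T : ℝ) := lt_of_le_of_lt hflB hBT
    exact_mod_cast this
  have hTB : (0:ℝ) < (T:ℝ) - B := by linarith
  -- regularity: T ≤ 2⌊B⌋
  have hceil : ⌈B⌉₊ ≤ ⌊B⌋₊ + 1 := Nat.ceil_le_floor_add_one B
  have hT2fl : T ≤ 2 * ⌊B⌋₊ := by omega
  have hT2fl' : (T:ℝ) ≤ 2 * (⌊B⌋₊:ℝ) := by exact_mod_cast hT2fl
  set r : ℝ := B / (B - 1) with hr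
  have hr1 : 1 < r := by
    rw [hr, lt_div_iff₀ hB1']; linarith
  have hrne : r ≠ 1 := ne_of_gt hr1
  set C : ℝ := B * (⌊B⌋₊ : ℝ) / ((T : ℝ) - B) with hC
  have hflpos : (0:ℝ) < (⌊B⌋₊:ℝ) := by exact_mod_cast hfl1
  have hCB : B - 1 < C := by
    rw [hC, lt_div_iff₀ hTB]
    nlinarith
  have hCpow : ∀ j : ℕ, B - 1 < C * r ^ j := by
    intro j
    have h1 : (1:ℝ) ≤ r ^ j := one_le_pow₀ hr1.le
    have hC0 : (0:ℝ) < C := lt_trans hB1' hCB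
    calc B - 1 < C := hCB
      _ ≤ C * r ^ j := le_mul_of_one_le_right hC0.le h1
  -- notation
  set N : ℕ := T - ⌊B⌋₊ with hNdef
  have hN1 : 1 ≤ N := by omega
  have hkN' : k ≤ N := hkN
  set Dk : ℝ := C * r ^ (N - k) - (B - 1) with hDk
  set D1 : ℝ := C * r ^ (N - 1) - (B - 1) with hD1
  have hDkpos : 0 < Dk := by rw [hDk]; linarith [hCpow (N - k)]
  have hD1pos : 0 < D1 := by rw [hD1]; linarith [hCpow (N - 1)]
  have hβ0' : β0 = D1⁻¹ := by rw [hβ0, hD1, hC]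
  -- exponent split
  have hexp : r ^ (N - 1) = r ^ (N - k) * r ^ (k - 1) := by
    rw [← pow_add]
    congr 1
    omega
  -- sum evaluation
  have hsum : ∑ l ∈ Finset.range (k - 1), β l
      = (r ^ (k - 1) - 1) / (r - 1) * β0 := by
    have : ∀ l ∈ Finset.range (k - 1), β l = r ^ l * β0 := by
      intro l hl
      rw [Finset.mem_range] at hl
      exact hβlow l (by omega)
    rw [Finset.sum_congr rfl this, ← Finset.sum_mul, geom_sum_eq hrne]
  have hβk1 : β (k - 1) = r ^ (k - 1) * β0 := hβlow (k - 1) (by omega)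
  have hrne0 : r - 1 ≠ 0 := sub_ne_zero.mpr hrne
  have hane : r ^ (k - 1) ≠ 0 := pow_ne_zero _ (by positivity)
  have hD1ne : D1 ≠ 0 := ne_of_gt hD1pos
  have hDkne : Dk ≠ 0 := ne_of_gt hDkpos
  -- denominator identity
  have hrm1 : r - 1 = 1 / (B - 1) := by
    rw [hr]; field_simp; ring
  have hkey : D1 - (B - 1) * (r ^ (k - 1) - 1) = r ^ (k - 1) * Dk := by
    rw [hD1, hDk, hexp]; ring
  have h2 : (r ^ (k - 1) - 1) / (r - 1) = (B - 1) * (r ^ (k - 1) - 1) := by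
    rw [hrm1]
    field_simp
  have hden : 1 - (r ^ (k - 1) - 1) / (r - 1) * β0 = r ^ (k - 1) * Dk * D1⁻¹ := by
    rw [hβ0', h2, ← hkey]
    field_simp
  rw [hβk1, hsum, hden, hβ0']
  have hx : r ^ (k - 1) * D1⁻¹ ≠ 0 := mul_ne_zero hane (inv_ne_zero hD1ne)
  rw [show r ^ (k - 1) * Dk * D1⁻¹ = r ^ (k - 1) * D1⁻¹ * Dk from by ring,
    div_mul_cancel_left₀ hx]
end

section
/- Fix T ∈ ℕ and B ∈ ℝ with 1 < B < T and ⌈B⌉ + ⌊B⌋ < T + 1, and let β be as defined in the context. Then for every k ∈ {1,…,⌈B⌉−1}, the conditional probability of stopping on the k-th contiguous good-weather day, given continuation through the first k−1, satisfies β_{k−1} / (1 − Σ_{l=0}^{k−2} β_l) = ( (B−1)·(B/(B−1))^{⌈B⌉−k}·B/(⌈B⌉−1) − (B−1) )^{−1}; moreover β_{⌈B⌉−1} / (1 − Σ_{l=0}^{⌈B⌉−2} β_l) = 1. -/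
open Finset

/-- For `1 < B < T` and `⌈B⌉ + ⌊B⌋ < T + 1`, with the optimal worst-case
weights `β` of SRP-R, the conditional probability of stopping on the k-th contiguous
good-weather day (given continuation through the first k−1) is
`((B−1)·(B/(B−1))^{⌈B⌉−k}·B/(⌈B⌉−1) − (B−1))⁻¹` for `k ∈ {1,…,⌈B⌉−1}`, and equals `1` at
`k = ⌈B⌉`. -/
theorem srpr_conditional_stopping_small_B
    (T : ℕ) (B : ℝ) (hB1 : 1 < B) (hBT : B < T)
    (hreg : ⌈B⌉₊ + ⌊B⌋₊ < T + 1)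
    (β : ℕ → ℝ) (β0 : ℝ)
    (hβ0 : β0 = ((B - 1) * ((B / (B - 1)) ^ (⌈B⌉₊ - 1) * B / ((⌈B⌉₊ : ℝ) - 1) - 1))⁻¹)
    (hβlow : ∀ l, l + 2 ≤ ⌈B⌉₊ → β l = (B / (B - 1)) ^ l * β0)
    (hβtop : β (⌈B⌉₊ - 1) = (B / (B - 1)) ^ (⌈B⌉₊ - 2) * (B + 1 - (⌈B⌉₊ : ℝ))
                  * (B / ((⌈B⌉₊ : ℝ) - 1)) * β0)
    (hβelse : ∀ l, ¬ l + 2 ≤ ⌈B⌉₊ → l ≠ ⌈B⌉₊ - 1 → β l = 0) :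
    (∀ k, 1 ≤ k → k + 1 ≤ ⌈B⌉₊ →
      β (k - 1) / (1 - ∑ l ∈ Finset.range (k - 1), β l)
        = ((B - 1) * (B / (B - 1)) ^ (⌈B⌉₊ - k) * B / ((⌈B⌉₊ : ℝ) - 1) - (B - 1))⁻¹) ∧
    β (⌈B⌉₊ - 1) / (1 - ∑ l ∈ Finset.range (⌈B⌉₊ - 1), β l) = 1 := by
  set N := ⌈B⌉₊ with hNdef
  have hN2 : 2 ≤ N := by
    have : 1 < ⌈B⌉₊ := Nat.lt_ceil.mpr (by exact_mod_cast hB1)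
    omega
  obtain ⟨n, hn⟩ : ∃ n, N = n + 1 := ⟨N - 1, by omega⟩
  have hn1 : 1 ≤ n := by omega
  have hB0 : (0:ℝ) < B - 1 := by linarith
  set r := B / (B - 1) with hr
  clear_value r
  have hr1 : 1 < r := by rw [hr]; exact (one_lt_div hB0).mpr (by linarith)
  have hr0 : (0:ℝ) < r := lt_trans one_pos hr1
  have hNcast : ((N:ℝ)) = (n:ℝ) + 1 := by exact_mod_cast congrArg (Nat.cast : ℕ → ℝ) hn
  have hnpos : (0:ℝ) < (n:ℝ) := by exact_mod_cast hn1
  have hnne : ((n:ℝ)) ≠ 0 := ne_of_gt hnpos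
  have hnB : (n:ℝ) < B := by
    have h := Nat.ceil_lt_add_one (le_of_lt (lt_trans one_pos hB1))
    rw [← hNdef, hNcast] at h
    linarith
  have hBn : 1 < B / (n:ℝ) := (one_lt_div hnpos).mpr hnB
  have hrn1 : ∀ m : ℕ, 1 ≤ r ^ m := fun m => one_le_pow₀ hr1.le
  have hD : 0 < r ^ n * B / (n:ℝ) - 1 := by
    have h1 := hrn1 n
    have : 1 < r ^ n * (B / (n:ℝ)) := by nlinarith
    rw [mul_div_assoc]; linarith
  have hDne : (B - 1) * (r ^ n * B / (n:ℝ) - 1) ≠ 0 := by positivity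
  have hβ0' : β0 = ((B - 1) * (r ^ n * B / (n:ℝ) - 1))⁻¹ := by
    rw [hβ0, show N - 1 = n from by omega, hNcast]; ring_nf
  have hβ0pos : 0 < β0 := by
    rw [hβ0']; exact inv_pos.mpr (by positivity)
  have hsum : ∀ m, m ≤ n → ∑ l ∈ Finset.range m, β l = β0 * ((B - 1) * (r ^ m - 1)) := by
    intro m hm
    have hc : ∀ l ∈ Finset.range m, β l = β0 * r ^ l := by
      intro l hl
      rw [hβlow l (by simp only [Finset.mem_range] at hl; omega)]; ring
    rw [Finset.sum_congr rfl hc, ← Finset.mul_sum, geom_sum_eq (ne_of_gt hr1)]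
    have hrm1 : r - 1 = 1 / (B - 1) := by rw [hr]; field_simp; ring
    rw [hrm1, div_div_eq_mul_div, div_one]
    ring
  have hden : ∀ m, m ≤ n →
      1 - ∑ l ∈ Finset.range m, β l = β0 * ((B - 1) * (r ^ n * B / (n:ℝ) - r ^ m)) := by
    intro m hm
    rw [hsum m hm]
    have h1 : β0 * ((B - 1) * (r ^ n * B / (n:ℝ) - 1)) = 1 := by
      rw [hβ0']; exact inv_mul_cancel₀ hDne
    linear_combination -h1
  constructor
  · intro k hk1 hk2
    obtain ⟨j, rfl⟩ : ∃ j, k = j + 1 := ⟨k - 1, by omega⟩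
    have hjn : j + 1 ≤ n := by omega
    rw [show j + 1 - 1 = j from rfl, hβlow j (by omega), hden j (by omega),
      show N - (j + 1) = n - j from by omega, hNcast]
    have hpow : r ^ (n - j) * r ^ j = r ^ n := by rw [← pow_add]; congr 1; omega
    rw [← hpow]
    have ha := hrn1 (n - j)
    have hb : (0:ℝ) < r ^ j := pow_pos hr0 _
    have hkey : 1 < r ^ (n - j) * (B / (n:ℝ)) := by nlinarith
    have hX : 0 < r ^ (n - j) * r ^ j * B / (n:ℝ) - r ^ j := by
      have h2 : r ^ j * 1 < r ^ j * (r ^ (n - j) * (B / (n:ℝ))) :=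
        (mul_lt_mul_iff_right₀ hb).mpr hkey
      rw [mul_div_assoc]
      nlinarith
    have hDm : 0 < β0 * ((B - 1) * (r ^ (n - j) * r ^ j * B / (n:ℝ) - r ^ j)) := by positivity
    have hE' : 0 < (B - 1) * r ^ (n - j) * B / (n:ℝ) - (B - 1) := by
      have h2 : (B - 1) * 1 < (B - 1) * (r ^ (n - j) * (B / (n:ℝ))) :=
        (mul_lt_mul_iff_right₀ hB0).mpr hkey
      have h3 : (B - 1) * r ^ (n - j) * B / (n:ℝ)
          = (B - 1) * (r ^ (n - j) * (B / (n:ℝ))) := by ring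
      rw [h3]; linarith
    rw [show ((n:ℝ) + 1 - 1) = (n:ℝ) from by ring]
    rw [div_eq_iff (ne_of_gt hDm), inv_mul_eq_div, eq_div_iff (ne_of_gt hE')]
    ring
  · rw [hβtop, show N - 2 = n - 1 from by omega, show N - 1 = n from by omega,
      hNcast, hden n le_rfl]
    have hpow : r ^ (n - 1) * r = r ^ n := by
      rw [← pow_succ]; congr 1; omega
    have h2 : (0:ℝ) < r ^ n := pow_pos hr0 _
    have hY : 0 < β0 * ((B - 1) * (r ^ n * B / (n:ℝ) - r ^ n)) := by
      have h4 : r ^ n * 1 < r ^ n * (B / (n:ℝ)) := (mul_lt_mul_iff_right₀ h2).mpr hBn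
      have h5 : r ^ n * B / (n:ℝ) = r ^ n * (B / (n:ℝ)) := by ring
      have h6 : 0 < r ^ n * B / (n:ℝ) - r ^ n := by rw [h5]; linarith
      positivity
    have hrB : r * (B - 1) = B := by rw [hr]; field_simp
    rw [div_eq_one_iff_eq (ne_of_gt hY), ← hpow,
      show ((n:ℝ) + 1 - 1) = (n:ℝ) from by ring]
    linear_combination (-(r ^ (n - 1) * β0 * (B - (n:ℝ)) * ((n:ℝ))⁻¹)) * hrB
      + r * r ^ (n - 1) * β0 * (1 - B) * mul_inv_cancel₀ hnne
end

section
/- For fixed stopping cost B > 1, the competitive ratio of the finite-horizon ski-rental problem is weakly increasing in the horizon: for every T ≥ 1, V(T) ≤ V(T+1), where V(T) denotes the infimum over finitely supported probability distributions β on the (finite) set of adapted stopping rules for horizon T of the maximum over inputs X ∈ {0,1}^T with at least one good day of (Σ_s β(s)·cost(s,X)) / OPT(X). -/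
open Finset

/-- An adapted stopping rule for horizon `T`: it takes values in `{1,…,T+1}` and its value is
determined by the coordinates `1,…,min(s(X),T)` of the input. -/
def Adapted (T : ℕ) (s : (Fin T → Bool) → ℕ) : Prop :=
  (∀ X, 1 ≤ s X ∧ s X ≤ T + 1) ∧
  ∀ X Y : Fin T → Bool, (∀ i : Fin T, (i : ℕ) < min (s X) T → X i = Y i) → s Y = s X

/-- Cost of the stopping rule `s` on input `X`: rent (cost 1) on each good-weather day strictly
before the stopping day, plus the stopping cost `B` if it stops by day `T`. -/
noncomputable def cost (T : ℕ) (B : ℝ) (s : (Fin T → Bool) → ℕ) (X : Fin T → Bool) : ℝ :=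
  (∑ i : Fin T, if (i : ℕ) + 1 < s X ∧ X i = true then (1 : ℝ) else 0)
    + (if s X ≤ T then B else 0)

/-- Number of good-weather days in input `X`. -/
def good (T : ℕ) (X : Fin T → Bool) : ℕ := (Finset.univ.filter fun i => X i = true).card

/-- Expectation over the i.i.d. Bernoulli(p) distribution on inputs. -/
noncomputable def Ep (T : ℕ) (p : ℝ) (f : (Fin T → Bool) → ℝ) : ℝ :=
  ∑ X : Fin T → Bool, p ^ good T X * (1 - p) ^ (T - good T X) * f X

/-- The offline (hindsight) optimum on input `X`. -/
noncomputable def OPTX (T : ℕ) (B : ℝ) (X : Fin T → Bool) : ℝ := min (good T X : ℝ) B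

/-- Worst-case ratio of the randomized algorithm `β` against the offline optimum, over inputs
with at least one good-weather day. -/
noncomputable def worstRatio (T : ℕ) (B : ℝ) (β : ((Fin T → Bool) → ℕ) →₀ ℝ) : ℝ :=
  sSup { w : ℝ | ∃ X : Fin T → Bool, 1 ≤ good T X ∧
      w = (β.sum fun s ws => ws * cost T B s X) / OPTX T B X }

/-- The competitive ratio of the finite-horizon ski-rental problem with horizon `T`: the
infimum, over finitely supported probability distributions on adapted stopping rules, of the
worst-case ratio. -/
noncomputable def V (T : ℕ) (B : ℝ) : ℝ :=
  sInf { v : ℝ | ∃ β : ((Fin T → Bool) → ℕ) →₀ ℝ,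
      (∀ s, 0 ≤ β s) ∧ (β.sum fun _ w => w) = 1 ∧
      (∀ s ∈ β.support, Adapted T s) ∧ v = worstRatio T B β }

-- auxiliary
def extX (T : ℕ) (X : Fin T → Bool) : Fin (T+1) → Bool :=
  fun i => if h : (i : ℕ) < T then X ⟨i, h⟩ else false

noncomputable def Phi (T : ℕ) (s : (Fin (T+1) → Bool) → ℕ) : (Fin T → Bool) → ℕ :=
  fun X => min (s (extX T X)) (T+1)

lemma extX_castSucc (T : ℕ) (X : Fin T → Bool) (i : Fin T) :
    extX T X i.castSucc = X i := by
  simp [extX, Fin.castSucc, i.isLt]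

lemma extX_last (T : ℕ) (X : Fin T → Bool) : extX T X (Fin.last T) = false := by
  simp [extX]

lemma good_extX (T : ℕ) (X : Fin T → Bool) : good (T+1) (extX T X) = good T X := by
  classical
  unfold good
  rw [Finset.card_filter, Finset.card_filter, Fin.sum_univ_castSucc]
  simp [extX_castSucc, extX_last]

lemma adapted_Phi (T : ℕ) (s : (Fin (T+1) → Bool) → ℕ) (hs : Adapted (T+1) s) :
    Adapted T (Phi T s) := by
  obtain ⟨hrange, hadapt⟩ := hs
  constructor
  · intro X
    constructor
    · exact le_min (hrange (extX T X)).1 (by omega)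
    · exact min_le_right _ _
  · intro X Y h
    have hXY : s (extX T Y) = s (extX T X) := by
      apply hadapt
      intro i hi
      rcases lt_or_ge (i : ℕ) T with hiT | hiT
      · have : (i : ℕ) < min (Phi T s X) T := by
          simp only [Phi] at *
          omega
        have := h ⟨i, hiT⟩ this
        simpa [extX, hiT] using this
      · have : (i : ℕ) = T := by omega
        simp [extX, this]
    simp [Phi, hXY]

lemma cost_Phi_le (T : ℕ) (B : ℝ) (hB : 0 ≤ B) (s : (Fin (T+1) → Bool) → ℕ)
    (X : Fin T → Bool) : cost T B (Phi T s) X ≤ cost (T+1) B s (extX T X) := by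
  unfold cost
  have hsum : (∑ i : Fin T, if (i : ℕ) + 1 < Phi T s X ∧ X i = true then (1:ℝ) else 0)
      = ∑ i : Fin (T+1), if (i : ℕ) + 1 < s (extX T X) ∧ extX T X i = true then (1:ℝ) else 0 := by
    rw [Fin.sum_univ_castSucc]
    simp only [extX_last, Fin.coe_castSucc, extX_castSucc]
    rw [if_neg (by simp)]
    rw [add_zero]
    apply Finset.sum_congr rfl
    intro i _
    apply if_congr _ rfl rfl
    simp only [Phi, lt_min_iff]
    constructor
    · rintro ⟨⟨h1, _⟩, h2⟩; exact ⟨h1, h2⟩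
    · rintro ⟨h1, h2⟩; exact ⟨⟨h1, by omega⟩, h2⟩
  rw [hsum]
  gcongr
  simp only [Phi]
  by_cases h1 : min (s (extX T X)) (T + 1) ≤ T <;> by_cases h2 : s (extX T X) ≤ T + 1 <;> simp only [h1, h2, if_true, if_false]
  · exact le_rfl
  · exact absurd h1 (by omega)
  · exact hB
  · exact le_rfl

lemma cost_nonneg (T : ℕ) (B : ℝ) (hB : 0 ≤ B) (s : (Fin T → Bool) → ℕ) (X : Fin T → Bool) :
    0 ≤ cost T B s X := by
  unfold cost
  apply add_nonneg
  · apply Finset.sum_nonneg; intro i _; split_ifs <;> norm_num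
  · split_ifs <;> simp [hB]

lemma OPTX_pos (T : ℕ) (B : ℝ) (hB : 1 < B) (X : Fin T → Bool) (h : 1 ≤ good T X) :
    0 < OPTX T B X := by
  unfold OPTX
  apply lt_min
  · exact_mod_cast Nat.lt_of_lt_of_le Nat.zero_lt_one h
  · linarith

lemma good_const_true (T : ℕ) : good T (fun _ => true) = T := by
  simp [good]

lemma bddAbove_ratioSet (T : ℕ) (B : ℝ) (β : ((Fin T → Bool) → ℕ) →₀ ℝ) :
    BddAbove { w : ℝ | ∃ X : Fin T → Bool, 1 ≤ good T X ∧
      w = (β.sum fun s ws => ws * cost T B s X) / OPTX T B X } := by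
  have : { w : ℝ | ∃ X : Fin T → Bool, 1 ≤ good T X ∧
      w = (β.sum fun s ws => ws * cost T B s X) / OPTX T B X }
      = (fun X => (β.sum fun s ws => ws * cost T B s X) / OPTX T B X) ''
        {X | 1 ≤ good T X} := by
    ext w; simp [eq_comm]
  rw [this]
  exact (Set.toFinite _).image _ |>.bddAbove

lemma num_nonneg (T : ℕ) (B : ℝ) (hB : 0 ≤ B) (β : ((Fin T → Bool) → ℕ) →₀ ℝ)
    (hnn : ∀ s, 0 ≤ β s) (X : Fin T → Bool) :
    0 ≤ β.sum fun s ws => ws * cost T B s X := by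
  apply Finset.sum_nonneg
  intro s _
  exact mul_nonneg (hnn s) (cost_nonneg T B hB s X)

lemma worstRatio_nonneg (T : ℕ) (B : ℝ) (hT : 1 ≤ T) (hB : 1 < B)
    (β : ((Fin T → Bool) → ℕ) →₀ ℝ) (hnn : ∀ s, 0 ≤ β s) :
    0 ≤ worstRatio T B β := by
  have hmem : ((β.sum fun s ws => ws * cost T B s (fun _ => true)) / OPTX T B (fun _ => true))
      ∈ { w : ℝ | ∃ X : Fin T → Bool, 1 ≤ good T X ∧
      w = (β.sum fun s ws => ws * cost T B s X) / OPTX T B X } :=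
    ⟨fun _ => true, by rw [good_const_true]; exact hT, rfl⟩
  have h0 : 0 ≤ (β.sum fun s ws => ws * cost T B s (fun _ => true)) / OPTX T B (fun _ => true) :=
    div_nonneg (num_nonneg T B (by linarith) β hnn _)
      (le_of_lt (OPTX_pos T B hB _ (by rw [good_const_true]; exact hT)))
  exact le_trans h0 (le_csSup (bddAbove_ratioSet T B β) hmem)

lemma worstRatio_push_le (T : ℕ) (B : ℝ) (hT : 1 ≤ T) (hB : 1 < B)
    (β : ((Fin (T+1) → Bool) → ℕ) →₀ ℝ) (hnn : ∀ s, 0 ≤ β s) :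
    worstRatio T B (Finsupp.mapDomain (Phi T) β) ≤ worstRatio (T+1) B β := by
  classical
  apply csSup_le
  · exact ⟨_, fun _ => true, by rw [good_const_true]; exact hT, rfl⟩
  · rintro w ⟨X, hgood, rfl⟩
    have hnum : ((Finsupp.mapDomain (Phi T) β).sum fun s ws => ws * cost T B s X)
        = β.sum fun s ws => ws * cost T B (Phi T s) X :=
      Finsupp.sum_mapDomain_index (fun _ => zero_mul _) (fun _ b₁ b₂ => add_mul b₁ b₂ _)
    have hnumle : (β.sum fun s ws => ws * cost T B (Phi T s) X)
        ≤ β.sum fun s ws => ws * cost (T+1) B s (extX T X) := by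
      apply Finset.sum_le_sum
      intro s _
      exact mul_le_mul_of_nonneg_left (cost_Phi_le T B (by linarith) s X) (hnn s)
    have hOPT : OPTX T B X = OPTX (T+1) B (extX T X) := by
      unfold OPTX; rw [good_extX]
    have hgood' : 1 ≤ good (T+1) (extX T X) := by rw [good_extX]; exact hgood
    have hOPTpos := OPTX_pos (T+1) B hB (extX T X) hgood'
    have hle : ((Finsupp.mapDomain (Phi T) β).sum fun s ws => ws * cost T B s X) / OPTX T B X
        ≤ (β.sum fun s ws => ws * cost (T+1) B s (extX T X)) / OPTX (T+1) B (extX T X) := by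
      rw [hnum, hOPT]
      gcongr
    exact le_trans hle (le_csSup (bddAbove_ratioSet (T+1) B β) ⟨extX T X, hgood', rfl⟩)


/-- For fixed stopping cost `B > 1`, the competitive ratio of the
finite-horizon ski-rental problem is weakly increasing in the horizon. -/
theorem competitive_ratio_monotone_in_horizon
    (B : ℝ) (hB : 1 < B) (T : ℕ) (hT : 1 ≤ T) : V T B ≤ V (T + 1) B := by
  classical
  apply le_csInf
  · refine ⟨worstRatio (T+1) B (Finsupp.single (fun _ => T+2) 1),
      Finsupp.single (fun _ => T+2) 1, ?_, ?_, ?_, rfl⟩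
    · intro s
      rw [Finsupp.single_apply]
      split_ifs <;> norm_num
    · rw [Finsupp.sum_single_index rfl]
    · intro s hs
      rw [Finsupp.support_single_ne_zero _ one_ne_zero, Finset.mem_singleton] at hs
      subst hs
      exact ⟨fun X => show 1 ≤ T + 2 ∧ T + 2 ≤ T + 1 + 1 from ⟨by omega, by omega⟩,
        fun X Y _ => rfl⟩
  · rintro v ⟨β, hnn, hsum, hadapt, rfl⟩
    set β' := Finsupp.mapDomain (Phi T) β with hβ'
    have hβ'nn : ∀ s, 0 ≤ β' s := by
      intro s
      rw [hβ', Finsupp.mapDomain, Finsupp.sum_apply]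
      apply Finset.sum_nonneg
      intro t _
      show 0 ≤ (Finsupp.single (Phi T t) (β t)) s
      rw [Finsupp.single_apply]
      split_ifs
      · exact hnn t
      · exact le_rfl
    have hβ'sum : (β'.sum fun _ w => w) = 1 := by
      rw [hβ', Finsupp.sum_mapDomain_index (fun _ => rfl) (fun _ _ _ => rfl)]
      exact hsum
    have hβ'ad : ∀ s ∈ β'.support, Adapted T s := by
      intro s hs
      obtain ⟨t, ht, rfl⟩ := Finset.mem_image.mp (Finsupp.mapDomain_support hs)
      exact adapted_Phi T t (hadapt t ht)
    have hbdd : BddBelow { v : ℝ | ∃ β : ((Fin T → Bool) → ℕ) →₀ ℝ,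
        (∀ s, 0 ≤ β s) ∧ (β.sum fun _ w => w) = 1 ∧
        (∀ s ∈ β.support, Adapted T s) ∧ v = worstRatio T B β } := by
      refine ⟨0, ?_⟩
      rintro v ⟨γ, hγnn, _, _, rfl⟩
      exact worstRatio_nonneg T B hT hB γ hγnn
    calc V T B ≤ worstRatio T B β' := csInf_le hbdd ⟨β', hβ'nn, hβ'sum, hβ'ad, rfl⟩
      _ ≤ worstRatio (T+1) B β := worstRatio_push_le T B hT hB β hnn
end

section
/- Fix T ∈ ℕ and B ∈ ℝ with 1 < B < T. For l ∈ {0,…,T}, let s_l be the stopping rule with s_l(X) = min{ i ∈ {1,…,T} : Σ_{j≤i} X_j = l+1 } (and s_l(X) = T+1 if no such i exists), and for k ∈ {1,…,T} let X^k ∈ {0,1}^T be the input with X^k_i = 1 exactly for i ≤ k. Suppose (β, γ) is a mixed Nash equilibrium of SRP-R, i.e. β and γ are probability vectors on {0,…,T} and {1,…,T} respectively with Σ_{l,k} β_l γ_k u(l,k) ≥ Σ_l β_l u(l,k') for every k' ∈ {1,…,T} and Σ_{l,k} β_l γ_k u(l,k) ≤ Σ_k γ_k u(l',k) for every l' ∈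 {0,…,T}. Then the induced strategy profile is a mixed Nash equilibrium of the full ski-rental game: for every input X ∈ {0,1}^T with at least one good day, Σ_l β_l · cost(s_l, X)/OPT(X) ≤ Σ_{l,k} β_l γ_k u(l,k), and for every adapted stopping rule s, Σ_k γ_k · cost(s, X^k)/OPT(X^k) ≥ Σ_{l,k} β_l γ_k u(l,k). -/
open Finset

/-- Number of good-weather days among the first `i` days (1-indexed) of input `X`. -/
def goodCount (T : ℕ) (X : Fin T → Bool) (i : ℕ) : ℕ :=
  (Finset.univ.filter fun j : Fin T => (j : ℕ) < i ∧ X j = true).card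

/-- The stopping rule `s_l`: stop on the day on which the `(l+1)`-st good-weather day occurs,
and never stop if there are at most `l` good-weather days. -/
def sRule (T l : ℕ) (X : Fin T → Bool) : ℕ :=
  if h : ((Finset.Icc 1 T).filter fun i => goodCount T X i = l + 1).Nonempty
  then ((Finset.Icc 1 T).filter fun i => goodCount T X i = l + 1).min' h
  else T + 1

/-- The input `X^k`: good weather exactly on the first `k` days. -/
def Xinp (T k : ℕ) : Fin T → Bool := fun i => decide ((i : ℕ) < k)

/-- The adversary's payoff in the reduced game SRP-R. -/
noncomputable def uR (B : ℝ) (l k : ℕ) : ℝ :=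
  if l < k then ((l : ℝ) + B) / min (k : ℝ) B else (k : ℝ) / min (k : ℝ) B

-- lemmas appended to defs
lemma goodCount_mono (T : ℕ) (X : Fin T → Bool) : Monotone (goodCount T X) := by
  intro a b hab
  apply Finset.card_le_card
  intro j hj
  simp only [mem_filter] at *
  exact ⟨hj.1, lt_of_lt_of_le hj.2.1 hab, hj.2.2⟩

lemma goodCount_zero (T : ℕ) (X : Fin T → Bool) : goodCount T X 0 = 0 := by
  simp [goodCount]

lemma goodCount_top (T : ℕ) (X : Fin T → Bool) : goodCount T X T = good T X := by
  unfold goodCount good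
  congr 1
  ext j
  simp [j.isLt]

lemma goodCount_succ_le (T : ℕ) (X : Fin T → Bool) (i : ℕ) :
    goodCount T X (i + 1) ≤ goodCount T X i + 1 := by
  by_cases hi : i < T
  · have hsub : (Finset.univ.filter fun j : Fin T => (j : ℕ) < i + 1 ∧ X j = true)
        ⊆ insert ⟨i, hi⟩ (Finset.univ.filter fun j : Fin T => (j : ℕ) < i ∧ X j = true) := by
      intro j hj
      simp only [mem_filter, mem_insert] at *
      rcases Nat.lt_succ_iff_lt_or_eq.mp hj.2.1 with h | h
      · exact Or.inr ⟨Finset.mem_univ _, h, hj.2.2⟩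
      · exact Or.inl (Fin.ext h)
    calc goodCount T X (i+1) ≤ _ := Finset.card_le_card hsub
      _ ≤ goodCount T X i + 1 := Finset.card_insert_le _ _
  · have : goodCount T X (i + 1) = goodCount T X i := by
      unfold goodCount; congr 1; ext j
      have := j.isLt
      simp only [mem_filter]
      constructor <;> (rintro ⟨a,b,c⟩; exact ⟨a, by omega, c⟩)
    omega

lemma goodCount_le_good (T : ℕ) (X : Fin T → Bool) (i : ℕ) : goodCount T X i ≤ good T X := by
  rw [← goodCount_top]
  rcases le_or_gt i T with h | h
  · exact goodCount_mono T X h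
  · exact le_of_eq (by
      unfold goodCount; congr 1; ext j
      have := j.isLt
      simp only [mem_filter]
      constructor <;> (rintro ⟨a,b,c⟩; exact ⟨a, by omega, c⟩))

lemma exists_goodCount (T : ℕ) (X : Fin T → Bool) (l : ℕ) (h : l + 1 ≤ good T X) :
    ∃ i ≤ T, goodCount T X i = l + 1 := by
  rw [← goodCount_top] at h
  have key : ∀ n, l + 1 ≤ goodCount T X n → ∃ i ≤ n, goodCount T X i = l + 1 := by
    intro n
    induction n with
    | zero => intro hn; rw [goodCount_zero] at hn; omega
    | succ n ih =>
      intro hn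
      by_cases hc : l + 1 ≤ goodCount T X n
      · obtain ⟨i, hi, he⟩ := ih hc
        exact ⟨i, Nat.le_succ_of_le hi, he⟩
      · have := goodCount_succ_le T X n
        exact ⟨n + 1, le_refl _, by omega⟩
  obtain ⟨i, hi, he⟩ := key T h
  exact ⟨i, hi, he⟩

lemma sum_boole_card (T : ℕ) (s : (Fin T → Bool) → ℕ) (X : Fin T → Bool) (hs : 1 ≤ s X) :
    (∑ i : Fin T, if (i : ℕ) + 1 < s X ∧ X i = true then (1:ℝ) else 0)
      = (goodCount T X (s X - 1) : ℝ) := by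
  rw [Finset.sum_boole]
  congr 1
  unfold goodCount
  congr 1
  ext i
  simp only [mem_filter]
  constructor <;> (rintro ⟨a, b, c⟩; exact ⟨a, by omega, c⟩)

lemma cost_eq (T : ℕ) (B : ℝ) (s : (Fin T → Bool) → ℕ) (X : Fin T → Bool) (hs : 1 ≤ s X) :
    cost T B s X = (goodCount T X (s X - 1) : ℝ) + (if s X ≤ T then B else 0) := by
  unfold cost
  rw [sum_boole_card T s X hs]

lemma good_le_T (T : ℕ) (X : Fin T → Bool) : good T X ≤ T := by
  calc good T X ≤ Finset.univ.card := Finset.card_filter_le _ _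
    _ = T := by simp
lemma sRule_spec_lt (T l : ℕ) (X : Fin T → Bool) (h : l < good T X) :
    1 ≤ sRule T l X ∧ sRule T l X ≤ T ∧ goodCount T X (sRule T l X - 1) = l := by
  obtain ⟨i, hiT, hie⟩ := exists_goodCount T X l (by omega)
  have hi1 : 1 ≤ i := by
    rcases Nat.eq_zero_or_pos i with h0 | h0
    · rw [h0, goodCount_zero] at hie; omega
    · exact h0
  set S := ((Finset.Icc 1 T).filter fun i => goodCount T X i = l + 1) with hS
  have hne : S.Nonempty := ⟨i, by simp [hS, Finset.mem_Icc, hi1, hiT, hie]⟩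
  have hrule : sRule T l X = S.min' hne := by rw [sRule, dif_pos hne]
  set m := S.min' hne with hm
  have hmem : m ∈ S := S.min'_mem hne
  simp only [hS, mem_filter, Finset.mem_Icc] at hmem
  obtain ⟨⟨hm1, hmT⟩, hgc⟩ := hmem
  rw [hrule]
  refine ⟨hm1, hmT, ?_⟩
  have h1 : goodCount T X (m - 1) ≤ l + 1 := by
    rw [← hgc]; exact goodCount_mono T X (by omega)
  have h2 : goodCount T X m ≤ goodCount T X (m - 1) + 1 := by
    have := goodCount_succ_le T X (m - 1)
    have hm' : m - 1 + 1 = m := by omega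
    rwa [hm'] at this
  have h3 : goodCount T X (m - 1) ≠ l + 1 := by
    intro hc
    have h0 : 1 ≤ m - 1 := by
      rcases Nat.eq_zero_or_pos (m - 1) with h0 | h0
      · rw [h0, goodCount_zero] at hc; omega
      · exact h0
    have hmemS : m - 1 ∈ S := by
      simp only [hS, mem_filter, Finset.mem_Icc]
      exact ⟨⟨h0, by omega⟩, hc⟩
    have := S.min'_le _ hmemS
    omega
  omega

lemma sRule_ge (T l : ℕ) (X : Fin T → Bool) (h : good T X ≤ l) : sRule T l X = T + 1 := by
  rw [sRule, dif_neg]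
  rintro ⟨i, hi⟩
  simp only [mem_filter] at hi
  have := goodCount_le_good T X i
  omega

lemma card_filter_lt (T k : ℕ) (hk : k ≤ T) :
    (Finset.univ.filter fun i : Fin T => (i : ℕ) < k).card = k := by
  rw [show (Finset.univ.filter fun i : Fin T => (i : ℕ) < k)
      = (Finset.range k).attachFin (fun m hm => lt_of_lt_of_le (Finset.mem_range.mp hm) hk) from ?_,
    Finset.card_attachFin, Finset.card_range]
  ext i
  simp [Finset.mem_attachFin]

lemma good_Xinp (T k : ℕ) (hk : k ≤ T) : good T (Xinp T k) = k := by
  unfold good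
  rw [show (Finset.univ.filter fun i : Fin T => Xinp T k i = true)
      = Finset.univ.filter (fun i : Fin T => (i : ℕ) < k) from ?_, card_filter_lt T k hk]
  ext i
  simp [Xinp]

lemma goodCount_Xinp (T k i : ℕ) (hk : k ≤ T) :
    goodCount T (Xinp T k) i = min i k := by
  unfold goodCount
  rw [show (Finset.univ.filter fun j : Fin T => (j : ℕ) < i ∧ Xinp T k j = true)
      = Finset.univ.filter (fun j : Fin T => (j : ℕ) < min i k) from ?_,
    card_filter_lt T _ (by omega)]
  ext j
  simp only [mem_filter, Xinp, decide_eq_true_eq, Nat.lt_min, Finset.mem_univ, true_and]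

lemma cost_ratio (T l : ℕ) (B : ℝ) (hB : 1 < B) (X : Fin T → Bool) (hg : 1 ≤ good T X) :
    cost T B (sRule T l) X / OPTX T B X = uR B l (good T X) := by
  by_cases hl : l < good T X
  · obtain ⟨h1, h2, h3⟩ := sRule_spec_lt T l X hl
    rw [cost_eq T B _ X h1, if_pos h2, h3, OPTX, uR, if_pos hl]
  · have hs : sRule T l X = T + 1 := sRule_ge T l X (by omega)
    rw [cost_eq T B _ X (by omega), hs, if_neg (by omega)]
    have : T + 1 - 1 = T := by omega
    rw [this, goodCount_top, OPTX, uR, if_neg hl, add_zero]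
/-- Any mixed Nash equilibrium `(β, γ)` of the reduced game SRP-R induces a
mixed Nash equilibrium of the full ski-rental game: the induced randomized algorithm guarantees
the equilibrium value against every input with at least one good day, and the induced
randomized input guarantees the equilibrium value against every adapted stopping rule. -/
theorem srpr_equilibrium_is_full_game_equilibrium
    (T : ℕ) (B : ℝ) (hB : 1 < B) (hBT : B < T)
    (β γ : ℕ → ℝ)
    (hβ0 : ∀ l ∈ Finset.range (T + 1), 0 ≤ β l)
    (hβ1 : ∑ l ∈ Finset.range (T + 1), β l = 1)
    (hγ0 : ∀ k ∈ Finset.Icc 1 T, 0 ≤ γ k)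
    (hγ1 : ∑ k ∈ Finset.Icc 1 T, γ k = 1)
    (hNE1 : ∀ k' ∈ Finset.Icc 1 T,
      ∑ l ∈ Finset.range (T + 1), β l * uR B l k'
        ≤ ∑ l ∈ Finset.range (T + 1), ∑ k ∈ Finset.Icc 1 T, β l * γ k * uR B l k)
    (hNE2 : ∀ l' ∈ Finset.range (T + 1),
      ∑ l ∈ Finset.range (T + 1), ∑ k ∈ Finset.Icc 1 T, β l * γ k * uR B l k
        ≤ ∑ k ∈ Finset.Icc 1 T, γ k * uR B l' k) :
    (∀ X : Fin T → Bool, 1 ≤ good T X →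
      ∑ l ∈ Finset.range (T + 1), β l * (cost T B (sRule T l) X / OPTX T B X)
        ≤ ∑ l ∈ Finset.range (T + 1), ∑ k ∈ Finset.Icc 1 T, β l * γ k * uR B l k) ∧
    (∀ s : (Fin T → Bool) → ℕ, Adapted T s →
      ∑ l ∈ Finset.range (T + 1), ∑ k ∈ Finset.Icc 1 T, β l * γ k * uR B l k
        ≤ ∑ k ∈ Finset.Icc 1 T, γ k * (cost T B s (Xinp T k) / OPTX T B (Xinp T k))) := by
  constructor
  · -- Part 1: the randomized algorithm achieves the value on every input with a good day.
    intro X hg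
    have hgT : good T X ≤ T := good_le_T T X
    have heq : ∀ l ∈ Finset.range (T + 1),
        β l * (cost T B (sRule T l) X / OPTX T B X) = β l * uR B l (good T X) := by
      intro l _
      rw [cost_ratio T l B hB X hg]
    rw [Finset.sum_congr rfl heq]
    exact hNE1 (good T X) (Finset.mem_Icc.mpr ⟨hg, hgT⟩)
  · -- Part 2: the randomized input forces at least the value against any adapted rule.
    intro s hA
    obtain ⟨hrange, hadapt⟩ := hA
    set m := s (Xinp T T) with hm
    have hm1 : 1 ≤ m := (hrange _).1
    have hmT : m ≤ T + 1 := (hrange _).2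
    refine le_trans (hNE2 (m - 1) (Finset.mem_range.mpr (by omega))) (Finset.sum_le_sum ?_)
    intro k hk
    rw [Finset.mem_Icc] at hk
    obtain ⟨hk1, hkT⟩ := hk
    have hOPT : OPTX T B (Xinp T k) = min (k : ℝ) B := by rw [OPTX, good_Xinp T k hkT]
    have hOPTpos : (0 : ℝ) < min (k : ℝ) B := by
      apply lt_min _ (by linarith)
      exact_mod_cast hk1
    apply mul_le_mul_of_nonneg_left _ (hγ0 k (Finset.mem_Icc.mpr ⟨hk1, hkT⟩))
    by_cases hmk : m ≤ k
    · -- The rule behaves on X^k exactly as on the all-good input: it stops on day m.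
      have hsk : s (Xinp T k) = m := by
        apply hadapt (Xinp T T) (Xinp T k)
        intro i hi
        simp only [Xinp, decide_eq_decide]
        have hit := i.isLt
        omega
      have hc : cost T B s (Xinp T k) = ((m - 1 : ℕ) : ℝ) + B := by
        rw [cost_eq T B s _ (hrange _).1, hsk, if_pos (by omega), goodCount_Xinp T k _ hkT,
          Nat.min_eq_left (by omega)]
      rw [hc, hOPT, uR, if_pos (by omega)]
    · -- The rule has not stopped by day k on X^k, so it pays for all k good days.
      have hsk : k + 1 ≤ s (Xinp T k) := by
        by_contra hcon
        push_neg at hcon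
        have hagree : ∀ i : Fin T, (i : ℕ) < min (s (Xinp T k)) T →
            Xinp T k i = Xinp T T i := by
          intro i hi
          simp only [Xinp, decide_eq_decide]
          have hit := i.isLt
          omega
        have := hadapt (Xinp T k) (Xinp T T) hagree
        omega
      have hc : ((k : ℕ) : ℝ) ≤ cost T B s (Xinp T k) := by
        rw [cost_eq T B s _ (by omega), goodCount_Xinp T k _ hkT,
          Nat.min_eq_right (by omega)]
        have hnn : (0 : ℝ) ≤ if s (Xinp T k) ≤ T then B else 0 := by
          split <;> linarith
        linarith
      rw [hOPT, uR, if_neg (by omega)]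
      exact (div_le_div_iff_of_pos_right hOPTpos).mpr hc
end

section
/- Fix T ∈ ℕ and B ∈ ℝ with 1 < B ≤ T. In SRP-R: (i) every adversary pure strategy k with ⌈B⌉ ≤ k ≤ T−1 is weakly dominated by k = T, i.e. u(l,k) ≤ u(l,T) for all l ∈ {0,…,T}; and (ii) every algorithm pure strategy l with T−⌊B⌋ ≤ l ≤ T−1 is weakly dominated by l = T, i.e. u(T,k) ≤ u(l,k) for all k ∈ {1,…,T}. -/
/-- In SRP-R with `1 < B ≤ T`: (i) every adversary pure strategy
`k ∈ {⌈B⌉,…,T−1}` is weakly dominated by `k = T`, and (ii) every algorithm pure strategy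
`l ∈ {T−⌊B⌋,…,T−1}` is weakly dominated by `l = T`. -/
theorem srpr_weak_domination
    (T : ℕ) (B : ℝ) (hB : 1 < B) (hBT : B ≤ T) :
    (∀ k, ⌈B⌉₊ ≤ k → k ≤ T - 1 → ∀ l ≤ T, uR B l k ≤ uR B l T) ∧
    (∀ l, T - ⌊B⌋₊ ≤ l → l ≤ T - 1 → ∀ k ∈ Finset.Icc 1 T, uR B T k ≤ uR B l k) := by
  have hB0 : (0:ℝ) < B := by linarith
  have hT1 : 1 ≤ T := by
    have h : (1:ℝ) ≤ (T:ℝ) := by linarith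
    exact_mod_cast h
  constructor
  · intro k hk hkT l hl
    have hkT' : k < T := by omega
    have hBk : B ≤ (k:ℝ) := le_trans (Nat.le_ceil B) (by exact_mod_cast hk)
    rw [uR, uR, min_eq_right hBk, min_eq_right hBT]
    by_cases h1 : l < k
    · rw [if_pos h1, if_pos (lt_trans h1 hkT')]
    · rw [if_neg h1]
      push_neg at h1
      have hkl : (k:ℝ) ≤ (l:ℝ) := by exact_mod_cast h1
      by_cases h2 : l < T
      · rw [if_pos h2]
        gcongr
        linarith
      · rw [if_neg h2]
        have : (k:ℝ) ≤ (T:ℝ) := by exact_mod_cast le_of_lt hkT'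
        gcongr
  · intro l hl hlT k hk
    rw [Finset.mem_Icc] at hk
    obtain ⟨hk1, hkT⟩ := hk
    have hfl : ⌊B⌋₊ ≤ T := by
      have := Nat.floor_le_floor hBT
      simpa using this
    have hlB : (T:ℝ) ≤ (l:ℝ) + B := by
      have h1 : T ≤ l + ⌊B⌋₊ := by omega
      have h2 : ((⌊B⌋₊:ℕ):ℝ) ≤ B := Nat.floor_le (le_of_lt hB0)
      calc (T:ℝ) ≤ ((l + ⌊B⌋₊ : ℕ):ℝ) := by exact_mod_cast h1
        _ = (l:ℝ) + (⌊B⌋₊:ℝ) := by push_cast; ring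
        _ ≤ (l:ℝ) + B := by linarith
    have hmin : 0 < min (k:ℝ) B := lt_min (by exact_mod_cast hk1) hB0
    rw [uR, uR, if_neg (by omega : ¬ T < k)]
    by_cases h1 : l < k
    · rw [if_pos h1]
      gcongr
      calc (k:ℝ) ≤ (T:ℝ) := by exact_mod_cast hkT
        _ ≤ (l:ℝ) + B := hlB
    · rw [if_neg h1]
end

section
/- Fix T ≥ 1, B > 1, p ∈ [0,1], and a natural number k with 0 ≤ k ≤ T. Let s_k be the stopping rule that stops at the first good-weather day among days 1,…,k and otherwise never stops, i.e. s_k(X) = min{ i ∈ {1,…,k} : X_i = 1 } (and s_k(X) = T+1 if X_i = 0 for all i ≤ k). Then E_p[cost(s_k, X)] = B·(1 − (1−p)^k) + (1−p)^k · p · (T−k). -/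
open Finset

/-- The stopping rule `s_k`: stop at the first good-weather day among days `1,…,k`, and never
stop if all of the first `k` days have bad weather. -/
def ruleK (T k : ℕ) (X : Fin T → Bool) : ℕ :=
  if h : (Finset.univ.filter fun j : Fin T => (j : ℕ) < k ∧ X j = true).Nonempty
  then (((Finset.univ.filter fun j : Fin T => (j : ℕ) < k ∧ X j = true).min' h : Fin T) : ℕ) + 1
  else T + 1

lemma card_lt_k (T k : ℕ) (hk : k ≤ T) :
    (Finset.univ.filter fun i : Fin T => (i:ℕ) < k).card = k := by
  have h : (Finset.univ.filter fun i : Fin T => (i:ℕ) < k)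
      = (Finset.range k).attachFin (fun m hm => lt_of_lt_of_le (Finset.mem_range.mp hm) hk) := by
    ext i; simp [Finset.mem_attachFin]
  rw [h, Finset.card_attachFin, Finset.card_range]

lemma sum_prod_bool {T : ℕ} (w : Fin T → Bool → ℝ) :
    ∑ X : Fin T → Bool, ∏ i, w i (X i) = ∏ i, (w i true + w i false) := by
  have h : ∀ i : Fin T, w i true + w i false = ∑ b : Bool, w i b := by
    intro i; simp [Fintype.sum_bool]
  simp_rw [h]
  rw [Finset.prod_univ_sum, Fintype.piFinset_univ]

lemma weight_prod (T : ℕ) (p : ℝ) (X : Fin T → Bool) :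
    p ^ good T X * (1 - p) ^ (T - good T X) = ∏ i : Fin T, (if X i = true then p else 1 - p) := by
  rw [Finset.prod_ite, Finset.prod_const, Finset.prod_const]
  congr 2
  have := Finset.card_filter_add_card_filter_not (s := (univ : Finset (Fin T)))
    (p := fun i => X i = true)
  simp only [Finset.card_univ, Fintype.card_fin] at this
  simp only [good] at *
  omega

lemma cost_ruleK (T k : ℕ) (B : ℝ) (X : Fin T → Bool) :
    cost T B (ruleK T k) X =
      if ∀ i : Fin T, (i : ℕ) < k → X i = false then (good T X : ℝ) else B := by
  unfold cost ruleK
  by_cases h : (Finset.univ.filter fun j : Fin T => (j : ℕ) < k ∧ X j = true).Nonempty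
  · rw [dif_pos h]
    set S := Finset.univ.filter fun j : Fin T => (j : ℕ) < k ∧ X j = true with hS
    set m := S.min' h with hm
    have hmS : m ∈ S := S.min'_mem h
    have hmk : (m : ℕ) < k ∧ X m = true := by
      rw [hS] at hmS; simpa using hmS
    have hsum : (∑ i : Fin T, if (i : ℕ) + 1 < (m : ℕ) + 1 ∧ X i = true then (1:ℝ) else 0) = 0 := by
      apply Finset.sum_eq_zero
      intro i _
      rw [if_neg]
      rintro ⟨hi1, hi2⟩
      have hik : (i : ℕ) < k := lt_trans (by omega) hmk.1
      have hiS : i ∈ S := by rw [hS]; simp [hik, hi2]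
      have h2 : (m : ℕ) ≤ (i : ℕ) := S.min'_le i hiS
      omega
    rw [hsum, if_pos (by have := m.isLt; omega), if_neg]
    · ring
    · push_neg
      exact ⟨m, hmk.1, by simp [hmk.2]⟩
  · rw [dif_neg h]
    have hall : ∀ i : Fin T, (i : ℕ) < k → X i = false := by
      intro i hi
      by_contra hXi
      exact h ⟨i, by simp [hi, Bool.not_eq_false] at *; simpa [hi] using hXi⟩
    rw [if_pos hall, if_neg (by omega)]
    have h3 : (∑ i : Fin T, if (i : ℕ) + 1 < T + 1 ∧ X i = true then (1:ℝ) else 0)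
        = ∑ i : Fin T, if X i = true then (1:ℝ) else 0 := by
      apply Finset.sum_congr rfl
      intro i _
      congr 1
      simp [i.isLt]
    rw [h3, add_zero, good]
    rw [Finset.sum_boole]


/-- The expected cost of the rule `s_k` under the i.i.d. Bernoulli(p) input
distribution is `B·(1 − (1−p)^k) + (1−p)^k·p·(T−k)`. -/
theorem expected_cost_ruleK
    (T : ℕ) (hT : 1 ≤ T) (B : ℝ) (hB : 1 < B) (p : ℝ) (hp : p ∈ Set.Icc (0 : ℝ) 1)
    (k : ℕ) (hk : k ≤ T) :
    Ep T p (cost T B (ruleK T k))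
      = B * (1 - (1 - p) ^ k) + (1 - p) ^ k * p * ((T : ℝ) - (k : ℝ)) := by
  classical
  set g : Fin T → Bool → ℝ := fun i b =>
    if (i : ℕ) < k then (if b then 0 else 1 - p) else (if b then p else 1 - p) with hg
  set χ : (Fin T → Bool) → ℝ := fun X =>
    if ∀ i : Fin T, (i : ℕ) < k → X i = false then 1 else 0 with hχ
  -- pointwise: weight * χ = ∏ g
  have hWχ : ∀ X : Fin T → Bool,
      (∏ i, (if X i = true then p else 1 - p)) * χ X = ∏ i, g i (X i) := by
    intro X
    by_cases hA : ∀ i : Fin T, (i : ℕ) < k → X i = false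
    · rw [hχ]; simp only [if_pos hA, mul_one]
      apply Finset.prod_congr rfl
      intro i _
      by_cases hik : (i : ℕ) < k
      · rw [hA i hik]; simp [hg, hik]
      · simp [hg, hik]
    · rw [hχ]; simp only [if_neg hA, mul_zero]
      push_neg at hA
      obtain ⟨i, hik, hXi⟩ := hA
      have hXi' : X i = true := by simpa using hXi
      symm
      apply Finset.prod_eq_zero (Finset.mem_univ i)
      simp [hg, hik, hXi']
  have hgsum : ∀ i : Fin T, g i true + g i false = if (i : ℕ) < k then 1 - p else 1 := by
    intro i
    by_cases hik : (i : ℕ) < k <;> simp [hg, hik] <;> ring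
  -- S1
  have hS1 : ∑ X : Fin T → Bool, (∏ i, (if X i = true then p else 1 - p)) * χ X
      = (1 - p) ^ k := by
    simp_rw [hWχ]
    rw [sum_prod_bool]
    simp_rw [hgsum]
    rw [Finset.prod_ite, Finset.prod_const, Finset.prod_const, one_pow, mul_one, card_lt_k T k hk]
  -- S2
  have hS2 : ∑ X : Fin T → Bool, (∏ i, (if X i = true then p else 1 - p)) * χ X * (good T X : ℝ)
      = p * (1 - p) ^ k * ((T : ℝ) - (k : ℝ)) := by
    have hgood : ∀ X : Fin T → Bool, (good T X : ℝ) = ∑ j : Fin T, if X j = true then (1:ℝ) else 0 := by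
      intro X; rw [good, Finset.sum_boole]
    calc ∑ X : Fin T → Bool, (∏ i, (if X i = true then p else 1 - p)) * χ X * (good T X : ℝ)
        = ∑ X : Fin T → Bool, ∑ j : Fin T, (∏ i, g i (X i)) * (if X j = true then (1:ℝ) else 0) := by
          apply Finset.sum_congr rfl
          intro X _
          rw [hWχ, hgood, Finset.mul_sum]
      _ = ∑ j : Fin T, ∑ X : Fin T → Bool,
            ∏ i, (g i (X i) * (if i = j then (if X i then (1:ℝ) else 0) else 1)) := by
          rw [Finset.sum_comm]
          apply Finset.sum_congr rfl
          intro j _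
          apply Finset.sum_congr rfl
          intro X _
          rw [Finset.prod_mul_distrib]
          congr 1
          rw [Finset.prod_ite_eq' Finset.univ j (fun i => if X i then (1:ℝ) else 0)]
          simp
      _ = ∑ j : Fin T, if (j : ℕ) < k then 0 else p * (1 - p) ^ k := by
          apply Finset.sum_congr rfl
          intro j _
          rw [sum_prod_bool (fun i b => g i b * if i = j then if b = true then (1:ℝ) else 0 else 1)]
          by_cases hjk : (j : ℕ) < k
          · rw [if_pos hjk]
            apply Finset.prod_eq_zero (Finset.mem_univ j)
            simp [hg, hjk]
          · rw [if_neg hjk]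
            simp only [eq_self_iff_true, if_true, Bool.false_eq_true, if_false]
            rw [← Finset.mul_prod_erase Finset.univ _ (Finset.mem_univ j)]
            have hj : (g j true * (if j = j then (1:ℝ) else 1) + g j false * (if j = j then (0:ℝ) else 1)) = p := by
              simp [hg, hjk]
            have h1 : ∀ i ∈ Finset.univ.erase j,
                (g i true * (if i = j then (1:ℝ) else 1) + g i false * (if i = j then (0:ℝ) else 1))
                = if (i : ℕ) < k then 1 - p else (1:ℝ) := by
              intro i hi
              have hij : i ≠ j := Finset.ne_of_mem_erase hi
              rw [if_neg hij, if_neg hij, mul_one, mul_one, hgsum]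
            have hrest : ∏ i ∈ Finset.univ.erase j,
                (g i true * (if i = j then (1:ℝ) else 1) + g i false * (if i = j then (0:ℝ) else 1))
                = (1 - p) ^ k := by
              rw [Finset.prod_congr rfl h1, Finset.prod_ite, Finset.prod_const,
                Finset.prod_const, one_pow, mul_one]
              congr 1
              have he : (Finset.univ.erase j).filter (fun i : Fin T => (i : ℕ) < k)
                  = Finset.univ.filter (fun i : Fin T => (i : ℕ) < k) := by
                ext i
                simp only [Finset.mem_filter, Finset.mem_erase, Finset.mem_univ, true_and,
                  and_true]
                constructor
                · rintro ⟨_, h2⟩; exact h2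
                · intro h2
                  refine ⟨?_, h2⟩
                  rintro rfl; omega
              rw [he, card_lt_k T k hk]
            rw [hj, hrest]
      _ = p * (1 - p) ^ k * ((T : ℝ) - (k : ℝ)) := by
          rw [Finset.sum_ite, Finset.sum_const, Finset.sum_const, smul_zero, zero_add,
            nsmul_eq_mul]
          have hc : (Finset.univ.filter fun j : Fin T => ¬ (j : ℕ) < k).card = T - k := by
            have := Finset.card_filter_add_card_filter_not
              (s := (univ : Finset (Fin T))) (p := fun j : Fin T => (j : ℕ) < k)
            rw [card_lt_k T k hk] at this
            simp only [Finset.card_univ, Fintype.card_fin] at this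
            omega
          rw [hc]
          rw [Nat.cast_sub hk]
          ring
  -- put together
  rw [Ep]
  have hpt : ∀ X : Fin T → Bool,
      p ^ good T X * (1 - p) ^ (T - good T X) * cost T B (ruleK T k) X
      = B * (∏ i, (if X i = true then p else 1 - p))
        + (∏ i, (if X i = true then p else 1 - p)) * χ X * (good T X : ℝ)
        - B * ((∏ i, (if X i = true then p else 1 - p)) * χ X) := by
    intro X
    rw [weight_prod, cost_ruleK]
    by_cases hA : ∀ i : Fin T, (i : ℕ) < k → X i = false
    · rw [if_pos hA, hχ]; simp only [if_pos hA]; ring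
    · rw [if_neg hA, hχ]; simp only [if_neg hA]; ring
  simp_rw [hpt]
  rw [Finset.sum_sub_distrib, Finset.sum_add_distrib, ← Finset.mul_sum, ← Finset.mul_sum,
    hS1, hS2]
  have hS0 : ∑ X : Fin T → Bool, ∏ i, (if X i = true then p else 1 - p) = 1 := by
    rw [sum_prod_bool (fun _ b => if b = true then p else 1 - p)]
    simp
  rw [hS0]
  ring
end
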